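/- arXiv:0804.4324 — 7 statements merged into one kernel-verified Lean document; each statement's English description precedes it below -/
import Mathlib

section
/- Let k ≥ 2, l ≥ 2, a₁, a₂ ∈ ℂ∖{0}, and f = a₁z₁^k + a₂z₂^l ∈ ℂ[z₁,z₂]. Then for P ∈ ℂ[z₁,z₂], one has P·∂₂f ∈ ⟨f, ∂₁f⟩ if and only if P belongs to the sum of the ideal ⟨f, ∂₁f⟩ and the ℂ-linear span of the monomials z₁^i z₂^j with 0 ≤ i ≤ k−2 and 1 ≤ j ≤ l−1. -/
open MvPolynomial

lemma fin2_decomp (m : Fin 2 →₀ ℕ) :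
    m = Finsupp.single 0 (m 0) + Finsupp.single 1 (m 1) := by
  ext i
  fin_cases i <;> simp [Finsupp.single_apply]

lemma memJ (a b : ℕ) (Q : MvPolynomial (Fin 2) ℂ) :
    Q ∈ Ideal.span {(X 0 : MvPolynomial (Fin 2) ℂ) ^ a, X 1 ^ b} ↔
      ∀ m : Fin 2 →₀ ℕ, m 0 < a → m 1 < b → coeff m Q = 0 := by
  constructor
  · rintro h m hma hmb
    rw [Ideal.mem_span_pair] at h
    obtain ⟨u, v, rfl⟩ := h
    rw [coeff_add, X_pow_eq_monomial, X_pow_eq_monomial,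
      coeff_mul_monomial', coeff_mul_monomial']
    rw [if_neg, if_neg, add_zero]
    · simp only [Finsupp.single_le_iff]; omega
    · simp only [Finsupp.single_le_iff]; omega
  · intro h
    rw [as_sum Q]
    apply Ideal.sum_mem
    intro m hm
    have hne := MvPolynomial.mem_support_iff.mp hm
    have : a ≤ m 0 ∨ b ≤ m 1 := by
      by_contra hc
      push_neg at hc
      exact hne (h m hc.1 hc.2)
    rcases this with hma | hmb
    · have : (monomial m) (coeff m Q) =
        (monomial (m - Finsupp.single 0 a) (coeff m Q)) * X 0 ^ a := by
        rw [X_pow_eq_monomial, monomial_mul, mul_one,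
          tsub_add_cancel_of_le (Finsupp.single_le_iff.mpr hma)]
      rw [this]
      exact Ideal.mul_mem_left _ _ (Ideal.subset_span (by simp))
    · have : (monomial m) (coeff m Q) =
        (monomial (m - Finsupp.single 1 b) (coeff m Q)) * X 1 ^ b := by
        rw [X_pow_eq_monomial, monomial_mul, mul_one,
          tsub_add_cancel_of_le (Finsupp.single_le_iff.mpr hmb)]
      rw [this]
      exact Ideal.mul_mem_left _ _ (Ideal.subset_span (by simp))

/-- For `k, l ≥ 2`, nonzero `a₁, a₂ ∈ ℂ` and
`f = a₁z₁^k + a₂z₂^l ∈ ℂ[z₁,z₂]`, a polynomial `P` satisfies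
`P·∂₂f ∈ ⟨f, ∂₁f⟩` if and only if `P` lies in the sum of the ideal `⟨f, ∂₁f⟩`
and the ℂ-span of the monomials `z₁^i z₂^j` with `0 ≤ i ≤ k-2`, `1 ≤ j ≤ l-1`. -/
theorem stmt_2 (k l : ℕ) (hk : 2 ≤ k) (hl : 2 ≤ l) (a₁ a₂ : ℂ)
    (ha₁ : a₁ ≠ 0) (ha₂ : a₂ ≠ 0) (f : MvPolynomial (Fin 2) ℂ)
    (hf : f = C a₁ * X 0 ^ k + C a₂ * X 1 ^ l) (P : MvPolynomial (Fin 2) ℂ) :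
    P * pderiv 1 f ∈ Ideal.span {f, pderiv 0 f} ↔
      P ∈ (Ideal.span {f, pderiv 0 f}).restrictScalars ℂ ⊔
        Submodule.span ℂ
          {m : MvPolynomial (Fin 2) ℂ |
            ∃ i j : ℕ, i ≤ k - 2 ∧ 1 ≤ j ∧ j ≤ l - 1 ∧ m = X 0 ^ i * X 1 ^ j} := by
  have hc₁ : ((k : ℂ) * a₁) ≠ 0 := by
    apply mul_ne_zero _ ha₁
    exact Nat.cast_ne_zero.mpr (by omega)
  have hc₂ : ((l : ℂ) * a₂) ≠ 0 := by
    apply mul_ne_zero _ ha₂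
    exact Nat.cast_ne_zero.mpr (by omega)
  have h1 : pderiv 0 f = C ((k:ℂ) * a₁) * X 0 ^ (k-1) := by
    subst hf
    simp [pderiv_C_mul, pderiv_pow, pderiv_X, Pi.single_apply, map_mul]
    ring
  have h2 : pderiv 1 f = C ((l:ℂ) * a₂) * X 1 ^ (l-1) := by
    subst hf
    simp [pderiv_C_mul, pderiv_pow, pderiv_X, Pi.single_apply, map_mul]
    ring
  have hx : (X 0 : MvPolynomial (Fin 2) ℂ) ^ k = X 0 * X 0 ^ (k-1) := by
    conv_lhs => rw [show k = (k-1)+1 by omega, pow_succ']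
  -- the ideal equality
  have hI : Ideal.span {f, pderiv 0 f}
      = Ideal.span {(X 0 : MvPolynomial (Fin 2) ℂ) ^ (k-1), X 1 ^ l} := by
    apply le_antisymm
    · rw [Ideal.span_le]
      rintro q hq
      simp only [Set.mem_insert_iff, Set.mem_singleton_iff] at hq
      have hX0 : (X 0 : MvPolynomial (Fin 2) ℂ) ^ (k-1) ∈
          Ideal.span {(X 0 : MvPolynomial (Fin 2) ℂ) ^ (k-1), X 1 ^ l} :=
        Ideal.subset_span (by simp)
      have hX1 : (X 1 : MvPolynomial (Fin 2) ℂ) ^ l ∈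
          Ideal.span {(X 0 : MvPolynomial (Fin 2) ℂ) ^ (k-1), X 1 ^ l} :=
        Ideal.subset_span (by simp)
      rcases hq with rfl | rfl
      · rw [hf, hx, ← mul_assoc]
        exact Ideal.add_mem _ (Ideal.mul_mem_left _ _ hX0) (Ideal.mul_mem_left _ _ hX1)
      · rw [h1]
        exact Ideal.mul_mem_left _ _ hX0
    · rw [Ideal.span_le]
      rintro q hq
      simp only [Set.mem_insert_iff, Set.mem_singleton_iff] at hq
      have hfI : f ∈ Ideal.span {f, pderiv 0 f} := Ideal.subset_span (by simp)
      have hdI : pderiv 0 f ∈ Ideal.span {f, pderiv 0 f} := Ideal.subset_span (by simp)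
      have hX0 : (X 0 : MvPolynomial (Fin 2) ℂ) ^ (k-1) ∈ Ideal.span {f, pderiv 0 f} := by
        have : (X 0 : MvPolynomial (Fin 2) ℂ) ^ (k-1)
            = C (((k:ℂ) * a₁)⁻¹) * pderiv 0 f := by
          rw [h1, ← mul_assoc, ← C_mul, inv_mul_cancel₀ hc₁, C_1, one_mul]
        rw [this]
        exact Ideal.mul_mem_left _ _ hdI
      rcases hq with rfl | rfl
      · exact hX0
      · have : (X 1 : MvPolynomial (Fin 2) ℂ) ^ l
            = C a₂⁻¹ * f - (C a₂⁻¹ * C a₁ * X 0) * X 0 ^ (k-1) := by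
          rw [hf, hx]
          have ha₂' : (C a₂⁻¹ : MvPolynomial (Fin 2) ℂ) * C a₂ = 1 := by
            rw [← C_mul, inv_mul_cancel₀ ha₂, C_1]
          linear_combination (-(X 1 : MvPolynomial (Fin 2) ℂ) ^ l) * ha₂'
        rw [this]
        exact Ideal.sub_mem _ (Ideal.mul_mem_left _ _ hfI) (Ideal.mul_mem_left _ _ hX0)
  rw [hI]
  constructor
  · -- LHS → RHS
    intro h
    have hcond : ∀ m : Fin 2 →₀ ℕ, m 0 < k - 1 → m 1 = 0 → coeff m P = 0 := by
      intro m hm0 hm1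
      have hm' := (memJ (k-1) l _).mp h (m + Finsupp.single 1 (l-1)) (by simp [hm0])
        (by simp [hm1]; omega)
      rw [h2, show P * (C ((l:ℂ) * a₂) * X 1 ^ (l-1))
          = (C ((l:ℂ) * a₂) * P) * monomial (Finsupp.single 1 (l-1)) 1 by
            rw [← X_pow_eq_monomial]; ring,
        coeff_mul_monomial'] at hm'
      rw [if_pos le_add_self, add_tsub_cancel_right, mul_one, coeff_C_mul] at hm'
      exact (mul_eq_zero.mp hm').resolve_left hc₂
    -- now build membership in the sup
    rw [as_sum P]
    apply Submodule.sum_mem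
    intro m hm
    have hne := MvPolynomial.mem_support_iff.mp hm
    by_cases hbig : k - 1 ≤ m 0 ∨ l ≤ m 1
    · apply Submodule.mem_sup_left
      show (monomial m) (coeff m P) ∈ Ideal.span _
      rw [memJ]
      intro m' hm'0 hm'1
      rw [coeff_monomial]
      rw [if_neg]
      rintro rfl
      omega
    · push_neg at hbig
      obtain ⟨hb0, hb1⟩ := hbig
      have hj1 : 1 ≤ m 1 := by
        by_contra hj
        exact hne (hcond m hb0 (by omega))
      apply Submodule.mem_sup_right
      have : (monomial m) (coeff m P)
          = (coeff m P) • ((X 0 : MvPolynomial (Fin 2) ℂ) ^ (m 0) * X 1 ^ (m 1)) := by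
        rw [smul_eq_C_mul, X_pow_eq_monomial, X_pow_eq_monomial, monomial_mul, mul_one,
          C_mul_monomial, mul_one, ← fin2_decomp]
      rw [this]
      exact Submodule.smul_mem _ _ (Submodule.subset_span
        ⟨m 0, m 1, by omega, hj1, by omega, rfl⟩)
  · -- RHS → LHS
    intro h
    rw [Submodule.mem_sup] at h
    obtain ⟨q, hq, s, hs, rfl⟩ := h
    have hq' : q ∈ Ideal.span {(X 0 : MvPolynomial (Fin 2) ℂ) ^ (k-1), X 1 ^ l} := hq
    have hcond : ∀ m : Fin 2 →₀ ℕ, m 0 < k - 1 → m 1 = 0 → coeff m (q + s) = 0 := by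
      intro m hm0 hm1
      rw [coeff_add]
      have hq0 : coeff m q = 0 := (memJ (k-1) l q).mp hq' m hm0 (by omega)
      have hs0 : coeff m s = 0 := by
        induction hs using Submodule.span_induction with
        | mem x hx =>
          obtain ⟨i, j, hi, hj, hjl, rfl⟩ := hx
          rw [X_pow_eq_monomial, X_pow_eq_monomial, monomial_mul, mul_one, coeff_monomial]
          rw [if_neg]
          intro hEq
          have := DFunLike.congr_fun hEq 1
          simp [Finsupp.single_apply] at this
          omega
        | zero => simp
        | add x y _ _ ihx ihy => rw [coeff_add, ihx, ihy, add_zero]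
        | smul c x _ ihx => rw [coeff_smul, ihx, smul_zero]
      rw [hq0, hs0, add_zero]
    rw [memJ]
    intro m hm0 hm1
    rw [h2, show (q + s) * (C ((l:ℂ) * a₂) * X 1 ^ (l-1))
        = (C ((l:ℂ) * a₂) * (q + s)) * monomial (Finsupp.single 1 (l-1)) 1 by
          rw [← X_pow_eq_monomial]; ring,
      coeff_mul_monomial']
    split_ifs with hle
    · rw [mul_one, coeff_C_mul]
      have hle1 : l - 1 ≤ m 1 := by
        simpa [Finsupp.single_le_iff] using hle
      rw [hcond _ (by simp [Finsupp.tsub_apply, Finsupp.single_apply]; omega)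
        (by simp [Finsupp.tsub_apply, Finsupp.single_apply]; omega), mul_zero]
    · rfl
end

section
/- Let k ≥ 4, f = z₁²z₂ + z₂^{k-1} ∈ ℂ[z₁,z₂], and Q := ℂ[z₁,z₂]/⟨f, ∂₂f⟩. Then: (1) the classes of the monomials z₁^i z₂^j with i ∈ {0,1} and 0 ≤ j ≤ k−2 form a ℂ-basis of Q; and (2) the subspace {p ∈ Q : p·∂₁f = 0 in Q} has ℂ-basis given by the classes of z₂^{k-2} and of z₁z₂^j for 0 ≤ j ≤ k−2, hence has dimension k. -/
open MvPolynomial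

noncomputable section

abbrev P7 : Type := MvPolynomial (Fin 2) ℂ
abbrev A7 (m : ℕ) : Type := AdjoinRoot ((Polynomial.X : Polynomial ℂ) ^ (m+3))
def a7 (m : ℕ) : A7 m := AdjoinRoot.root _
abbrev q7 (m : ℕ) : Polynomial (A7 m) :=
  Polynomial.X ^ 2 + Polynomial.C (((m : A7 m)+3) * (a7 m)^(m+2))
abbrev B7 (m : ℕ) : Type := AdjoinRoot (q7 m)
def b7 (m : ℕ) : B7 m := AdjoinRoot.root _

instance (m : ℕ) : Nontrivial (A7 m) := AdjoinRoot.nontrivial _ (by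
  rw [Polynomial.degree_X_pow]; exact_mod_cast (by omega : (m+3 : ℕ) ≠ 0))

lemma q7_monic (m : ℕ) : (q7 m).Monic := Polynomial.monic_X_pow_add (by
  apply lt_of_le_of_lt (Polynomial.degree_C_le); exact_mod_cast (by norm_num))

lemma a7_pow (m : ℕ) : (a7 m) ^ (m+3) = 0 := by
  have := AdjoinRoot.mk_self (f := (Polynomial.X : Polynomial ℂ) ^ (m+3))
  rwa [← AdjoinRoot.aeval_eq, map_pow, Polynomial.aeval_X] at this

lemma b7_sq (m : ℕ) :
    (b7 m) ^ 2 + algebraMap (A7 m) (B7 m) (((m : A7 m)+3) * (a7 m)^(m+2)) = 0 := by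
  have := AdjoinRoot.mk_self (f := q7 m)
  rwa [← AdjoinRoot.aeval_eq, map_add, map_pow, Polynomial.aeval_X, Polynomial.aeval_C] at this

lemma stmt7_indep (m : ℕ) (I : Ideal (MvPolynomial (Fin 2) ℂ))
    (hI : I = Ideal.span {X 0 ^ 2 * X 1 + X 1 ^ (m+3),
      X 0 ^ 2 + ((m : MvPolynomial (Fin 2) ℂ)+3) * X 1 ^ (m+2)}) :
    LinearIndependent ℂ (fun p : Fin 2 × Fin (m+3) =>
      Ideal.Quotient.mk I (X 0 ^ (p.1:ℕ) * X 1 ^ (p.2:ℕ))) := by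
  set ab : B7 m := algebraMap (A7 m) (B7 m) (a7 m) with hab
  set φ : MvPolynomial (Fin 2) ℂ →ₐ[ℂ] B7 m := aeval ![b7 m, ab] with hφ
  have hφ0 : φ (X 0) = b7 m := by simp [hφ]
  have hφ1 : φ (X 1) = ab := by simp [hφ]
  have habp : ab ^ (m+3) = 0 := by
    rw [hab, ← map_pow, a7_pow, map_zero]
  have hb2 : (b7 m) ^ 2 = - (((m : B7 m)+3) * ab ^ (m+2)) := by
    have := b7_sq m
    rw [map_mul, map_pow, map_add, map_natCast, map_ofNat] at this
    rw [← hab] at this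
    linear_combination this
  have hφf : φ (X 0 ^ 2 * X 1 + X 1 ^ (m+3)) = 0 := by
    rw [map_add, map_mul, map_pow, map_pow, hφ0, hφ1, hb2, habp]
    linear_combination (-(m : B7 m) - 3) * habp
  have hφd : φ (X 0 ^ 2 + ((m : MvPolynomial (Fin 2) ℂ)+3) * X 1 ^ (m+2)) = 0 := by
    simp only [map_add, map_mul, map_pow, map_natCast, map_ofNat, hφ0, hφ1, hb2]
    ring
  have hker : ∀ p ∈ I, φ p = 0 := by
    intro p hp
    have hle : I ≤ RingHom.ker (φ : MvPolynomial (Fin 2) ℂ →+* B7 m) := by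
      rw [hI, Ideal.span_le]
      rintro x (rfl | rfl)
      · exact hφf
      · exact hφd
    exact hle hp
  set ψ : (MvPolynomial (Fin 2) ℂ ⧸ I) →ₐ[ℂ] B7 m := Ideal.Quotient.liftₐ I φ hker with hψ
  have hψmk : ∀ p, ψ (Ideal.Quotient.mk I p) = φ p := fun p => by
    rw [hψ]; exact Ideal.Quotient.lift_mk I _ _
  -- the basis of B7 m over ℂ
  set pbA : PowerBasis ℂ (A7 m) := AdjoinRoot.powerBasis' (Polynomial.monic_X_pow _) with hpbA
  set pbB : PowerBasis (A7 m) (B7 m) := AdjoinRoot.powerBasis' (q7_monic m) with hpbB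
  have hdimA : pbA.dim = m + 3 := by
    rw [hpbA, AdjoinRoot.powerBasis'_dim, Polynomial.natDegree_X_pow]
  have hdimB : pbB.dim = 2 := by
    rw [hpbB, AdjoinRoot.powerBasis'_dim]
    exact Polynomial.natDegree_X_pow_add_C
  set bas : Module.Basis (Fin pbA.dim × Fin pbB.dim) ℂ (B7 m) := pbA.basis.smulTower pbB.basis with hbas
  set e : Fin 2 × Fin (m+3) → Fin pbA.dim × Fin pbB.dim :=
    fun p => (⟨p.2.1, by rw [hdimA]; exact p.2.isLt⟩, ⟨p.1.1, by rw [hdimB]; exact p.1.isLt⟩) with he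
  have hcomp : ψ.toLinearMap ∘ (fun p : Fin 2 × Fin (m+3) =>
      Ideal.Quotient.mk I (X 0 ^ (p.1:ℕ) * X 1 ^ (p.2:ℕ))) = bas ∘ e := by
    funext p
    show ψ (Ideal.Quotient.mk I (X 0 ^ (p.1:ℕ) * X 1 ^ (p.2:ℕ))) = bas (e p)
    rw [hψmk, map_mul, map_pow, map_pow, hφ0, hφ1]
    have hgenA : pbA.gen = a7 m := by rw [hpbA, AdjoinRoot.powerBasis'_gen]; rfl
    have hgenB : pbB.gen = b7 m := by rw [hpbB, AdjoinRoot.powerBasis'_gen]; rfl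
    rw [hbas, Module.Basis.smulTower_apply, PowerBasis.basis_eq_pow, PowerBasis.basis_eq_pow,
      hgenA, hgenB, Algebra.smul_def, map_pow, ← hab]
    exact mul_comm _ _
  have he_inj : Function.Injective e := by
    rintro ⟨⟨i, hi⟩, ⟨j, hj⟩⟩ ⟨⟨i', hi'⟩, ⟨j', hj'⟩⟩ h
    simp only [he, Prod.mk.injEq, Fin.mk.injEq] at h
    simp only [Prod.mk.injEq, Fin.mk.injEq]
    exact ⟨h.2, h.1⟩
  have h1 : LinearIndependent ℂ (bas ∘ e) := bas.linearIndependent.comp e he_inj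
  rw [← hcomp] at h1
  exact LinearIndependent.of_comp ψ.toLinearMap h1


lemma stmt7_hmem (m : ℕ) (I : Ideal P7)
    (hI : I = Ideal.span {X 0 ^ 2 * X 1 + X 1 ^ (m+3),
      X 0 ^ 2 + ((m : P7)+3) * X 1 ^ (m+2)}) :
    (X 1 : P7) ^ (m+3) ∈ I ∧ (X 0 : P7) ^ 2 * X 1 ∈ I := by
  have hf : (X 0 ^ 2 * X 1 + X 1 ^ (m+3) : P7) ∈ I := by
    rw [hI]; exact Ideal.subset_span (by simp)
  have hd : (X 0 ^ 2 + ((m : P7)+3) * X 1 ^ (m+2) : P7) ∈ I := by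
    rw [hI]; exact Ideal.subset_span (by simp)
  have hC : (C ((m:ℂ)+2) : P7) = (m:P7) + 2 := by
    rw [map_add, map_natCast, map_ofNat]
  have h1 : (X 1 : P7)^(m+3) ∈ I := by
    have hmem : ((m:P7)+2) * X 1^(m+3) ∈ I := by
      have hmm := I.sub_mem (I.mul_mem_left (X 1) hd) hf
      have key : ((m:P7)+2) * X 1^(m+3)
          = X 1 * (X 0 ^ 2 + ((m : P7)+3) * X 1 ^ (m+2)) - (X 0 ^ 2 * X 1 + X 1 ^ (m+3)) := by
        ring
      rwa [← key] at hmm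
    have hne : ((m:ℂ)+2) ≠ 0 := by
      have : ((m+2:ℕ):ℂ) ≠ 0 := Nat.cast_ne_zero.mpr (by omega)
      push_cast at this
      exact this
    have key2 : (X 1 : P7)^(m+3) = C (((m:ℂ)+2)⁻¹) * (((m:P7)+2) * X 1^(m+3)) := by
      rw [← mul_assoc, ← hC, ← C_mul, inv_mul_cancel₀ hne, C_1, one_mul]
    rw [key2]
    exact I.mul_mem_left _ hmem
  refine ⟨h1, ?_⟩
  have key3 : (X 0 : P7)^2 * X 1 = (X 0 ^ 2 * X 1 + X 1 ^ (m+3)) - X 1 ^ (m+3) := by ring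
  rw [key3]
  exact I.sub_mem hf h1

lemma stmt7_hsmul (I : Ideal P7) (c : ℂ) (x : P7) :
    Ideal.Quotient.mk I (C c * x) = c • Ideal.Quotient.mk I x := by
  rw [← MvPolynomial.smul_eq_C_mul, ← Ideal.Quotient.mkₐ_eq_mk ℂ I, map_smul]

lemma stmt7_mono_mem (m : ℕ) (I : Ideal P7)
    (hI : I = Ideal.span {X 0 ^ 2 * X 1 + X 1 ^ (m+3),
      X 0 ^ 2 + ((m : P7)+3) * X 1 ^ (m+2)}) :
    ∀ a b : ℕ, Ideal.Quotient.mk I (X 0 ^ a * X 1 ^ b) ∈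
      Submodule.span ℂ (Set.range fun p : Fin 2 × Fin (m+3) =>
        Ideal.Quotient.mk I (X 0 ^ (p.1:ℕ) * X 1 ^ (p.2:ℕ))) := by
  obtain ⟨h1, h2⟩ := stmt7_hmem m I hI
  have hd : (X 0 ^ 2 + ((m : P7)+3) * X 1 ^ (m+2) : P7) ∈ I := by
    rw [hI]; exact Ideal.subset_span (by simp)
  intro a
  induction a using Nat.strong_induction_on with
  | _ a ih =>
    intro b
    by_cases h2a : 2 ≤ a
    · obtain ⟨a', rfl⟩ : ∃ a', a = a' + 2 := ⟨a-2, by omega⟩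
      have key : (X 0:P7)^(a'+2) * X 1^b
          = (X 0^a' * X 1^b) * (X 0 ^ 2 + ((m : P7)+3) * X 1 ^ (m+2))
            + C (-(m:ℂ)-3) * (X 0^a' * X 1^(b+(m+2))) := by
        have : (C (-(m:ℂ)-3) : P7) = -(m:P7)-3 := by
          rw [map_sub, map_neg, map_natCast, map_ofNat]
        rw [this]
        ring
      have hz : Ideal.Quotient.mk I ((X 0^a' * X 1^b) *
          (X 0 ^ 2 + ((m : P7)+3) * X 1 ^ (m+2))) = 0 := by
        rw [Ideal.Quotient.eq_zero_iff_mem]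
        exact I.mul_mem_left _ hd
      rw [key, map_add, hz, zero_add, stmt7_hsmul]
      exact Submodule.smul_mem _ _ (ih a' (by omega) (b+(m+2)))
    · by_cases hb : b ≤ m+2
      · apply Submodule.subset_span
        exact ⟨(⟨a, by omega⟩, ⟨b, by omega⟩), rfl⟩
      · obtain ⟨b', rfl⟩ : ∃ b', b = b' + (m+3) := ⟨b-(m+3), by omega⟩
        have : (X 0:P7)^a * X 1^(b'+(m+3)) = (X 0^a * X 1^b') * X 1^(m+3) := by ring
        rw [this, Ideal.Quotient.eq_zero_iff_mem.mpr (I.mul_mem_left _ h1)]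
        exact Submodule.zero_mem _

lemma stmt7_span (m : ℕ) (I : Ideal P7)
    (hI : I = Ideal.span {X 0 ^ 2 * X 1 + X 1 ^ (m+3),
      X 0 ^ 2 + ((m : P7)+3) * X 1 ^ (m+2)}) :
    Submodule.span ℂ (Set.range fun p : Fin 2 × Fin (m+3) =>
      Ideal.Quotient.mk I (X 0 ^ (p.1:ℕ) * X 1 ^ (p.2:ℕ))) = ⊤ := by
  rw [eq_top_iff]
  rintro x -
  obtain ⟨p, rfl⟩ := Ideal.Quotient.mk_surjective x
  induction p using MvPolynomial.induction_on' with
  | monomial u c =>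
    have hmono : (monomial u c : P7) = C c * (X 0 ^ (u 0) * X 1 ^ (u 1)) := by
      rw [monomial_eq, Finsupp.prod_fintype _ _ (fun i => pow_zero _)]
      rw [Fin.prod_univ_two]
    rw [hmono, stmt7_hsmul]
    exact Submodule.smul_mem _ _ (stmt7_mono_mem m I hI (u 0) (u 1))
  | add p q hp hq =>
    rw [map_add]
    exact Submodule.add_mem _ hp hq

end

set_option maxHeartbeats 1000000 in
theorem stmt7_main (m : ℕ) (I : Ideal P7)
    (hI : I = Ideal.span {X 0 ^ 2 * X 1 + X 1 ^ (m+3),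
      X 0 ^ 2 + ((m : P7)+3) * X 1 ^ (m+2)})
    (w : Fin 2 × Fin (m+3) → P7 ⧸ I)
    (hw : ∀ p, w p = Ideal.Quotient.mk I (X 0 ^ (p.1 : ℕ) * X 1 ^ (p.2 : ℕ)))
    (u : Fin (m+4) → P7 ⧸ I)
    (hu : ∀ i : Fin (m+4), u i = if (i : ℕ) = 0 then Ideal.Quotient.mk I (X 1 ^ (m+2))
      else Ideal.Quotient.mk I (X 0 * X 1 ^ ((i : ℕ) - 1))) :
    (LinearIndependent ℂ w ∧ Submodule.span ℂ (Set.range w) = ⊤) ∧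
    (LinearIndependent ℂ u ∧
      Submodule.span ℂ (Set.range u) =
        LinearMap.ker (LinearMap.mulRight ℂ (Ideal.Quotient.mk I (2*(X 0 * X 1)))) ∧
      Module.finrank ℂ
        (LinearMap.ker (LinearMap.mulRight ℂ (Ideal.Quotient.mk I (2*(X 0 * X 1))))) = m+4) := by
  obtain ⟨h1, h2⟩ := stmt7_hmem m I hI
  -- Part 1
  have hwfun : w = fun p : Fin 2 × Fin (m+3) =>
      Ideal.Quotient.mk I (X 0 ^ (p.1 : ℕ) * X 1 ^ (p.2 : ℕ)) := funext hw
  have h1a : LinearIndependent ℂ w := by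
    rw [hwfun]; exact stmt7_indep m I hI
  have h1b : Submodule.span ℂ (Set.range w) = ⊤ := by
    rw [hwfun]; exact stmt7_span m I hI
  haveI : FiniteDimensional ℂ (P7 ⧸ I) :=
    Module.Finite.of_basis (Module.Basis.mk h1a (le_of_eq h1b.symm))
  have hfr : Module.finrank ℂ (P7 ⧸ I) = 2*(m+3) := by
    rw [Module.finrank_eq_card_basis (Module.Basis.mk h1a (le_of_eq h1b.symm))]
    simp [Fintype.card_prod]
  -- Part 2 : multiplication facts
  have hw_mul : ∀ p : Fin 2 × Fin (m+3),
      w p * Ideal.Quotient.mk I (2*(X 0 * X 1))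
        = Ideal.Quotient.mk I (2 * (X 0 ^ ((p.1:ℕ)+1) * X 1 ^ ((p.2:ℕ)+1))) := by
    intro p
    rw [hw, ← map_mul]
    congr 1
    ring
  have hmulzero : ∀ j : ℕ, Ideal.Quotient.mk I (2 * (X 0 ^ 2 * X 1 ^ (j+1))) = 0 := by
    intro j
    have hkey : (2 * (X 0 ^ 2 * X 1 ^ (j+1)) : P7) = (2 * X 1 ^ j) * (X 0 ^ 2 * X 1) := by ring
    rw [hkey, Ideal.Quotient.eq_zero_iff_mem]
    exact I.mul_mem_left _ h2
  have hmulzero2 : Ideal.Quotient.mk I (2 * (X 0 ^ 1 * X 1 ^ (m+3))) = 0 := by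
    have hkey : (2 * (X 0 ^ 1 * X 1 ^ (m+3)) : P7) = (2 * X 0) * X 1 ^ (m+3) := by ring
    rw [hkey, Ideal.Quotient.eq_zero_iff_mem]
    exact I.mul_mem_left _ h1
  have hmul2 : ∀ j : ℕ, Ideal.Quotient.mk I (2 * (X 0 ^ 1 * X 1 ^ j)) =
      (2:ℂ) • Ideal.Quotient.mk I (X 0 ^ 1 * X 1 ^ j) := by
    intro j
    rw [show (2:P7) = C (2:ℂ) from (map_ofNat C 2).symm, stmt7_hsmul]
  -- u as a subfamily of w
  set σ : Fin (m+4) → Fin 2 × Fin (m+3) := fun i =>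
    if (i:ℕ) = 0 then (0, ⟨m+2, by omega⟩) else (1, ⟨(i:ℕ)-1, by omega⟩) with hσ
  have hufun : u = w ∘ σ := by
    funext i
    rw [hu]
    by_cases h : (i:ℕ) = 0
    · rw [if_pos h]
      show _ = w (σ i)
      rw [show σ i = (0, ⟨m+2, by omega⟩) from by rw [hσ]; exact if_pos h, hw]
      show Ideal.Quotient.mk I (X 1 ^ (m+2))
        = Ideal.Quotient.mk I (X 0 ^ ((0:Fin 2):ℕ) * X 1 ^ (m+2))
      norm_num
    · rw [if_neg h]
      show _ = w (σ i)
      rw [show σ i = (1, ⟨(i:ℕ)-1, by omega⟩) from by rw [hσ]; exact if_neg h, hw]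
      show Ideal.Quotient.mk I (X 0 * X 1 ^ ((i:ℕ)-1))
        = Ideal.Quotient.mk I (X 0 ^ ((1:Fin 2):ℕ) * X 1 ^ ((i:ℕ)-1))
      norm_num
  have hσinj : Function.Injective σ := by
    intro i j hij
    rw [hσ] at hij
    by_cases hi : (i:ℕ) = 0 <;> by_cases hj : (j:ℕ) = 0 <;>
      simp only [hi, hj, if_pos, if_neg, if_true, if_false, reduceIte] at hij
    · ext; omega
    · exfalso
      have := congrArg (fun q => (q.1 : ℕ)) hij
      simp at this
    · exfalso
      have := congrArg (fun q => (q.1 : ℕ)) hij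
      simp at this
    · have := congrArg (fun q => (q.2 : ℕ)) hij
      simp at this
      ext; omega
  have h2a : LinearIndependent ℂ u := by
    rw [hufun]; exact h1a.comp σ hσinj
  -- the multiplication map
  set T : (P7 ⧸ I) →ₗ[ℂ] (P7 ⧸ I) :=
    LinearMap.mulRight ℂ (Ideal.Quotient.mk I (2*(X 0 * X 1))) with hT
  have hTapp : ∀ x, T x = x * Ideal.Quotient.mk I (2*(X 0 * X 1)) := fun x => rfl
  have hTw : ∀ p : Fin 2 × Fin (m+3), (p.1:ℕ) = 1 → T (w p) = 0 := by
    intro p hp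
    rw [hTapp, hw_mul, hp]
    exact hmulzero _
  have hTw2 : ∀ p : Fin 2 × Fin (m+3), (p.1:ℕ) = 0 → (p.2:ℕ) = m+2 → T (w p) = 0 := by
    intro p hp hq
    rw [hTapp, hw_mul, hp, hq]
    exact hmulzero2
  have hTw3 : ∀ (p : Fin 2 × Fin (m+3)) (hlt : (p.2:ℕ) < m+2), (p.1:ℕ) = 0 →
      T (w p) = (2:ℂ) • w (1, ⟨(p.2:ℕ)+1, by omega⟩) := by
    intro p hlt hp
    rw [hTapp, hw_mul, hp, hmul2, hw]
    rfl
  have hsub : Submodule.span ℂ (Set.range u) ≤ LinearMap.ker T := by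
    rw [Submodule.span_le]
    rintro x ⟨i, rfl⟩
    rw [SetLike.mem_coe, LinearMap.mem_ker, hufun]
    by_cases h : (i:ℕ) = 0
    · have hσi : σ i = (0, ⟨m+2, by omega⟩) := by rw [hσ]; exact if_pos h
      show T (w (σ i)) = 0
      rw [hσi]
      exact hTw2 _ rfl rfl
    · have hσi : σ i = (1, ⟨(i:ℕ)-1, by omega⟩) := by rw [hσ]; exact if_neg h
      show T (w (σ i)) = 0
      rw [hσi]
      exact hTw _ rfl
  -- range of T
  have hrange : LinearMap.range T
      = Submodule.span ℂ (Set.range fun j : Fin (m+2) => w (1, ⟨(j:ℕ)+1, by omega⟩)) := by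
    apply le_antisymm
    · rw [LinearMap.range_eq_map, ← h1b, Submodule.map_span, Submodule.span_le]
      rintro x ⟨y, ⟨p, rfl⟩, rfl⟩
      show T (w p) ∈ _
      by_cases hp : (p.1:ℕ) = 0
      · by_cases hq : (p.2:ℕ) = m+2
        · rw [hTw2 p hp hq]; exact Submodule.zero_mem _
        · have hlt : (p.2:ℕ) < m+2 := by have := p.2.isLt; omega
          rw [hTw3 p hlt hp]
          exact Submodule.smul_mem _ _
            (Submodule.subset_span ⟨⟨(p.2:ℕ), hlt⟩, rfl⟩)
      · have hp1 : (p.1:ℕ) = 1 := by have := p.1.isLt; omega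
        rw [hTw p hp1]; exact Submodule.zero_mem _
    · rw [Submodule.span_le]
      rintro x ⟨j, rfl⟩
      have hkey : w (1, ⟨(j:ℕ)+1, by omega⟩)
          = (2:ℂ)⁻¹ • T (w (0, ⟨(j:ℕ), by omega⟩)) := by
        rw [hTw3 (0, ⟨(j:ℕ), by omega⟩) (by simpa using j.isLt) rfl, smul_smul]
        norm_num
      show w (1, ⟨(j:ℕ)+1, by omega⟩) ∈ LinearMap.range T
      rw [hkey]
      exact Submodule.smul_mem _ _ (LinearMap.mem_range_self T _)
  have hfr_range : Module.finrank ℂ (LinearMap.range T) = m+2 := by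
    rw [hrange]
    have hindep : LinearIndependent ℂ (fun j : Fin (m+2) => w (1, ⟨(j:ℕ)+1, by omega⟩)) := by
      have heq : (fun j : Fin (m+2) => w (1, ⟨(j:ℕ)+1, by omega⟩))
          = w ∘ (fun j : Fin (m+2) => ((1 : Fin 2), (⟨(j:ℕ)+1, by omega⟩ : Fin (m+3)))) := rfl
      rw [heq]
      refine h1a.comp _ ?_
      intro a b hab
      have := congrArg (fun q => (q.2 : ℕ)) hab
      simp at this
      ext
      omega
    rw [finrank_span_eq_card hindep, Fintype.card_fin]
  have hfr_ker : Module.finrank ℂ (LinearMap.ker T) = m+4 := by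
    have := LinearMap.finrank_range_add_finrank_ker T
    rw [hfr, hfr_range] at this
    omega
  have hfr_span_u : Module.finrank ℂ (Submodule.span ℂ (Set.range u)) = m+4 := by
    rw [finrank_span_eq_card h2a, Fintype.card_fin]
  have hspan_u : Submodule.span ℂ (Set.range u) = LinearMap.ker T :=
    Submodule.eq_of_le_of_finrank_le hsub (by rw [hfr_ker, hfr_span_u])
  exact ⟨⟨h1a, h1b⟩, h2a, hspan_u, hfr_ker⟩


/-- For `k ≥ 4`, `f = z₁²z₂ + z₂^{k-1}` and
`Q = ℂ[z₁,z₂]/⟨f, ∂₂f⟩`: (1) the classes of `z₁^i z₂^j`, `i ∈ {0,1}`,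
`0 ≤ j ≤ k−2`, form a ℂ-basis of `Q`; (2) the subspace
`{p ∈ Q : p·∂₁f = 0}` has ℂ-basis the classes of `z₂^{k-2}` and `z₁z₂^j`
for `0 ≤ j ≤ k−2`, hence dimension `k`. -/
theorem stmt_7 (k : ℕ) (hk : 4 ≤ k) (f : MvPolynomial (Fin 2) ℂ)
    (hf : f = X 0 ^ 2 * X 1 + X 1 ^ (k - 1))
    (π : MvPolynomial (Fin 2) ℂ →+* (MvPolynomial (Fin 2) ℂ ⧸ Ideal.span {f, pderiv 1 f}))
    (hπ : π = Ideal.Quotient.mk (Ideal.span {f, pderiv 1 f}))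
    (w : Fin 2 × Fin (k - 1) → MvPolynomial (Fin 2) ℂ ⧸ Ideal.span {f, pderiv 1 f})
    (hw : ∀ p, w p = π (X 0 ^ (p.1 : ℕ) * X 1 ^ (p.2 : ℕ)))
    (u : Fin k → MvPolynomial (Fin 2) ℂ ⧸ Ideal.span {f, pderiv 1 f})
    (hu : ∀ i : Fin k, u i =
      if (i : ℕ) = 0 then π (X 1 ^ (k - 2)) else π (X 0 * X 1 ^ ((i : ℕ) - 1))) :
    (LinearIndependent ℂ w ∧ Submodule.span ℂ (Set.range w) = ⊤) ∧
    (LinearIndependent ℂ u ∧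
      Submodule.span ℂ (Set.range u) =
        LinearMap.ker (LinearMap.mulRight ℂ (π (pderiv 0 f))) ∧
      Module.finrank ℂ
        (LinearMap.ker (LinearMap.mulRight ℂ (π (pderiv 0 f)))) = k) := by
  obtain ⟨m, rfl⟩ : ∃ m, k = m + 4 := ⟨k - 4, by omega⟩
  subst hf hπ
  have hd : pderiv 1 (X 0 ^ 2 * X 1 + X 1 ^ (m+4-1) : P7)
      = X 0 ^ 2 + ((m:P7)+3) * X 1 ^ (m+2) := by
    show pderiv 1 (X 0 ^ 2 * X 1 + X 1 ^ (m+3) : P7) = _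
    simp [pderiv_mul, pderiv_pow, pderiv_X_self, pderiv_X 0 1]
  have hd0 : pderiv 0 (X 0 ^ 2 * X 1 + X 1 ^ (m+4-1) : P7) = 2 * (X 0 * X 1) := by
    show pderiv 0 (X 0 ^ 2 * X 1 + X 1 ^ (m+3) : P7) = _
    simp [pderiv_mul, pderiv_pow, pderiv_X_self]
    ring
  rw [hd0]
  have hI : Ideal.span {X 0 ^ 2 * X 1 + X 1 ^ (m+4-1),
        pderiv 1 (X 0 ^ 2 * X 1 + X 1 ^ (m+4-1) : P7)}
      = Ideal.span {X 0 ^ 2 * X 1 + X 1 ^ (m+3),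
        X 0 ^ 2 + ((m : P7)+3) * X 1 ^ (m+2)} := by
    rw [hd]
    rfl
  exact stmt7_main m _ hI w hw u hu
end

section
/- Let 2 ≤ i ≤ j ≤ k, a₁, a₂, a₃ ∈ ℂ∖{0}, and f = a₁z₁^i + a₂z₂^j + a₃z₃^k ∈ ℂ[z₁,z₂,z₃]. Then the quotient ℂ[z₁,z₂,z₃]/⟨∂₁f, ∂₂f, ∂₃f⟩ is a ℂ-vector space of dimension (i−1)(j−1)(k−1), with basis given by the classes of the monomials z₁^p z₂^q z₃^r for 0 ≤ p ≤ i−2, 0 ≤ q ≤ j−2, 0 ≤ r ≤ k−2. -/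
open MvPolynomial

lemma stmt_11_key (a b c : ℕ) (I : Ideal (MvPolynomial (Fin 3) ℂ))
    (hI : I = Ideal.span ((fun s => monomial s (1:ℂ)) ''
      {Finsupp.single 0 a, Finsupp.single 1 b, Finsupp.single 2 c}))
    (v : Fin a × Fin b × Fin c → MvPolynomial (Fin 3) ℂ ⧸ I)
    (hv : ∀ t, v t = Ideal.Quotient.mk I
      (X 0 ^ (t.1 : ℕ) * X 1 ^ (t.2.1 : ℕ) * X 2 ^ (t.2.2 : ℕ))) :
    Module.finrank ℂ (MvPolynomial (Fin 3) ℂ ⧸ I) = a * b * c ∧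
    LinearIndependent ℂ v ∧
    Submodule.span ℂ (Set.range v) = ⊤ := by
  have hmem : ∀ p : MvPolynomial (Fin 3) ℂ,
      p ∈ I ↔ ∀ m ∈ p.support, a ≤ m 0 ∨ b ≤ m 1 ∨ c ≤ m 2 := by
    intro p
    rw [hI, mem_ideal_span_monomial_image]
    refine forall₂_congr fun m _ => ?_
    constructor
    · rintro ⟨s, hs, hsm⟩
      simp only [Set.mem_insert_iff, Set.mem_singleton_iff] at hs
      rcases hs with rfl | rfl | rfl
      · exact Or.inl (Finsupp.single_le_iff.mp hsm)
      · exact Or.inr (Or.inl (Finsupp.single_le_iff.mp hsm))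
      · exact Or.inr (Or.inr (Finsupp.single_le_iff.mp hsm))
    · rintro (h | h | h)
      · exact ⟨_, by simp, Finsupp.single_le_iff.mpr h⟩
      · exact ⟨_, Set.mem_insert_iff.mpr (Or.inr (by simp)), Finsupp.single_le_iff.mpr h⟩
      · exact ⟨_, Set.mem_insert_iff.mpr (Or.inr (by simp)), Finsupp.single_le_iff.mpr h⟩
  set d : Fin a × Fin b × Fin c → (Fin 3 →₀ ℕ) := fun t =>
    Finsupp.single 0 (t.1 : ℕ) + Finsupp.single 1 (t.2.1 : ℕ) +
      Finsupp.single 2 (t.2.2 : ℕ) with hd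
  have hd0 : ∀ t, d t 0 = (t.1 : ℕ) := by intro t; simp [hd, Finsupp.single_apply]
  have hd1 : ∀ t, d t 1 = (t.2.1 : ℕ) := by intro t; simp [hd, Finsupp.single_apply]
  have hd2 : ∀ t, d t 2 = (t.2.2 : ℕ) := by intro t; simp [hd, Finsupp.single_apply]
  have hdinj : Function.Injective d := by
    intro t t' h
    have h0 := DFunLike.congr_fun h 0
    have h1 := DFunLike.congr_fun h 1
    have h2 := DFunLike.congr_fun h 2
    rw [hd0, hd0] at h0
    rw [hd1, hd1] at h1
    rw [hd2, hd2] at h2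
    exact Prod.ext (Fin.val_injective h0)
      (Prod.ext (Fin.val_injective h1) (Fin.val_injective h2))
  have hvd : ∀ t, v t = Ideal.Quotient.mk I (monomial (d t) 1) := by
    intro t
    rw [hv t, hd]
    congr 1
    rw [X_pow_eq_monomial, X_pow_eq_monomial, X_pow_eq_monomial, monomial_mul,
      monomial_mul]
    simp
  have hsm : ∀ (cz : ℂ) (q : MvPolynomial (Fin 3) ℂ),
      Ideal.Quotient.mk I (cz • q) = cz • Ideal.Quotient.mk I q := by
    intro cz q
    exact map_smul (Ideal.Quotient.mkₐ ℂ I) cz q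
  have hsmall : ∀ t : Fin a × Fin b × Fin c,
      ¬(a ≤ d t 0 ∨ b ≤ d t 1 ∨ c ≤ d t 2) := by
    rintro t (h | h | h)
    · rw [hd0] at h; exact absurd h (not_le.mpr t.1.isLt)
    · rw [hd1] at h; exact absurd h (not_le.mpr t.2.1.isLt)
    · rw [hd2] at h; exact absurd h (not_le.mpr t.2.2.isLt)
  have hindep : LinearIndependent ℂ v := by
    rw [linearIndependent_iff]
    intro l hl
    set p : MvPolynomial (Fin 3) ℂ := l.sum fun t cf => monomial (d t) cf with hp
    have hmk : Ideal.Quotient.mk I p = 0 := by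
      rw [← hl, Finsupp.linearCombination_apply, Finsupp.sum, hp, Finsupp.sum,
        map_sum]
      refine Finset.sum_congr rfl fun t _ => ?_
      have h : (monomial (d t)) (l t) = l t • (monomial (d t) 1 : MvPolynomial (Fin 3) ℂ) := by
        rw [smul_monomial, smul_eq_mul, mul_one]
      rw [h, hsm, hvd t]
    have hpI : p ∈ I := (Ideal.Quotient.eq_zero_iff_mem).mp hmk
    have hcoeff : ∀ t₀, p.coeff (d t₀) = l t₀ := by
      intro t₀
      rw [hp, Finsupp.sum, coeff_sum]
      simp only [coeff_monomial]
      have h : ∀ t ∈ l.support, (if d t = d t₀ then l t else 0) = if t = t₀ then l t else 0 := by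
        intro t _
        simp only [hdinj.eq_iff]
      rw [Finset.sum_congr rfl h, Finset.sum_ite_eq' l.support t₀ l]
      by_cases h : t₀ ∈ l.support
      · simp [h]
      · simp [h, Finsupp.notMem_support_iff.mp h]
    ext t₀
    by_contra h0
    have hsup : d t₀ ∈ p.support := by
      rw [mem_support_iff, hcoeff]
      exact h0
    exact hsmall t₀ ((hmem p).mp hpI _ hsup)
  have hspan : Submodule.span ℂ (Set.range v) = ⊤ := by
    rw [eq_top_iff]
    rintro x -
    obtain ⟨p, rfl⟩ := Ideal.Quotient.mk_surjective x
    induction p using MvPolynomial.induction_on' with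
    | add p q hpmem hqmem => rw [map_add]; exact Submodule.add_mem _ hpmem hqmem
    | monomial m cf =>
      by_cases hm : a ≤ m 0 ∨ b ≤ m 1 ∨ c ≤ m 2
      · have hmem' : (monomial m cf : MvPolynomial (Fin 3) ℂ) ∈ I := by
          rw [hmem]
          intro m' hm'
          rw [support_monomial] at hm'
          rcases em (cf = 0) with h | h
          · simp [h] at hm'
          · simp [h] at hm'
            subst hm'
            exact hm
        rw [Ideal.Quotient.eq_zero_iff_mem.mpr hmem']
        exact Submodule.zero_mem _
      · push_neg at hm
        obtain ⟨h0, h1, h2⟩ := hm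
        set t : Fin a × Fin b × Fin c := (⟨m 0, h0⟩, ⟨m 1, h1⟩, ⟨m 2, h2⟩) with ht
        have h3 : ∀ x : Fin 3, x = 0 ∨ x = 1 ∨ x = 2 := by decide
        have hmt : m = d t := by
          ext x
          rcases h3 x with rfl | rfl | rfl
          · rw [hd0]
          · rw [hd1]
          · rw [hd2]
        have heq : (Ideal.Quotient.mk I) (monomial m cf) = cf • v t := by
          rw [hvd, hmt, ← hsm, smul_monomial, smul_eq_mul, mul_one]
        rw [heq]
        exact Submodule.smul_mem _ _ (Submodule.subset_span ⟨t, rfl⟩)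
  refine ⟨?_, hindep, hspan⟩
  have B : Module.Basis (Fin a × Fin b × Fin c) ℂ (MvPolynomial (Fin 3) ℂ ⧸ I) :=
    Module.Basis.mk hindep (by rw [hspan])
  rw [Module.finrank_eq_card_basis B]
  simp [mul_assoc]

/-- For `2 ≤ i ≤ j ≤ k`, nonzero `a₁, a₂, a₃ ∈ ℂ` and
`f = a₁z₁^i + a₂z₂^j + a₃z₃^k`, the quotient `ℂ[z₁,z₂,z₃]/⟨∂₁f, ∂₂f, ∂₃f⟩`
has ℂ-dimension `(i−1)(j−1)(k−1)`, with basis the classes of the monomials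
`z₁^p z₂^q z₃^r`, `0 ≤ p ≤ i−2`, `0 ≤ q ≤ j−2`, `0 ≤ r ≤ k−2`. -/
theorem stmt_11 (i j k : ℕ) (hi : 2 ≤ i) (hij : i ≤ j) (hjk : j ≤ k)
    (a₁ a₂ a₃ : ℂ) (ha₁ : a₁ ≠ 0) (ha₂ : a₂ ≠ 0) (ha₃ : a₃ ≠ 0)
    (f : MvPolynomial (Fin 3) ℂ)
    (hf : f = C a₁ * X 0 ^ i + C a₂ * X 1 ^ j + C a₃ * X 2 ^ k)
    (v : Fin (i - 1) × Fin (j - 1) × Fin (k - 1) →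
      MvPolynomial (Fin 3) ℂ ⧸ Ideal.span {pderiv 0 f, pderiv 1 f, pderiv 2 f})
    (hv : ∀ t, v t = Ideal.Quotient.mk (Ideal.span {pderiv 0 f, pderiv 1 f, pderiv 2 f})
      (X 0 ^ (t.1 : ℕ) * X 1 ^ (t.2.1 : ℕ) * X 2 ^ (t.2.2 : ℕ))) :
    Module.finrank ℂ
      (MvPolynomial (Fin 3) ℂ ⧸ Ideal.span {pderiv 0 f, pderiv 1 f, pderiv 2 f}) =
      (i - 1) * (j - 1) * (k - 1) ∧
    LinearIndependent ℂ v ∧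
    Submodule.span ℂ (Set.range v) = ⊤ := by
  have hj2 : 2 ≤ j := le_trans hi hij
  have hk2 : 2 ≤ k := le_trans hj2 hjk
  have hp0 : pderiv 0 f = C (a₁ * i) * X 0 ^ (i - 1) := by
    simp [hf, mul_assoc, map_mul, map_natCast]
  have hp1 : pderiv 1 f = C (a₂ * j) * X 1 ^ (j - 1) := by
    simp [hf, mul_assoc, map_mul, map_natCast]
  have hp2 : pderiv 2 f = C (a₃ * k) * X 2 ^ (k - 1) := by
    simp [hf, mul_assoc, map_mul, map_natCast]
  have hc1 : (a₁ * i) ≠ 0 := mul_ne_zero ha₁ (Nat.cast_ne_zero.mpr (by omega))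
  have hc2 : (a₂ * j) ≠ 0 := mul_ne_zero ha₂ (Nat.cast_ne_zero.mpr (by omega))
  have hc3 : (a₃ * k) ≠ 0 := mul_ne_zero ha₃ (Nat.cast_ne_zero.mpr (by omega))
  apply stmt_11_key (i-1) (j-1) (k-1) _ ?_ v hv
  have himg : (fun s => monomial s (1:ℂ)) ''
      ({Finsupp.single 0 (i-1), Finsupp.single 1 (j-1), Finsupp.single 2 (k-1)} :
        Set (Fin 3 →₀ ℕ)) =
      {X 0 ^ (i - 1), X 1 ^ (j - 1), X 2 ^ (k - 1)} := by
    simp [Set.image_insert_eq, X_pow_eq_monomial]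
  rw [himg]
  apply le_antisymm <;> rw [Ideal.span_le] <;> intro x hx <;>
    simp only [Set.mem_insert_iff, Set.mem_singleton_iff] at hx
  · rcases hx with rfl | rfl | rfl
    · rw [hp0]; exact Ideal.mul_mem_left _ _ (Ideal.subset_span (by simp))
    · rw [hp1]; exact Ideal.mul_mem_left _ _ (Ideal.subset_span (by simp))
    · rw [hp2]; exact Ideal.mul_mem_left _ _ (Ideal.subset_span (by simp))
  · rcases hx with rfl | rfl | rfl
    · have h : (X 0 ^ (i-1) : MvPolynomial (Fin 3) ℂ) = C (a₁ * ↑i)⁻¹ * pderiv 0 f := by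
        rw [hp0, ← mul_assoc, ← C_mul, inv_mul_cancel₀ hc1, C_1, one_mul]
      rw [h]; exact Ideal.mul_mem_left _ _ (Ideal.subset_span (by simp))
    · have h : (X 1 ^ (j-1) : MvPolynomial (Fin 3) ℂ) = C (a₂ * ↑j)⁻¹ * pderiv 1 f := by
        rw [hp1, ← mul_assoc, ← C_mul, inv_mul_cancel₀ hc2, C_1, one_mul]
      rw [h]; exact Ideal.mul_mem_left _ _ (Ideal.subset_span (by simp))
    · have h : (X 2 ^ (k-1) : MvPolynomial (Fin 3) ℂ) = C (a₃ * ↑k)⁻¹ * pderiv 2 f := by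
        rw [hp2, ← mul_assoc, ← C_mul, inv_mul_cancel₀ hc3, C_1, one_mul]
      rw [h]; exact Ideal.mul_mem_left _ _ (Ideal.subset_span (by simp))
end

section
/- Let 2 ≤ i ≤ j ≤ k, a₁, a₂, a₃ ∈ ℂ∖{0}, f = a₁z₁^i + a₂z₂^j + a₃z₃^k ∈ ℂ[z₁,z₂,z₃], and A := ℂ[z₁,z₂,z₃]/⟨f⟩. Write ∇f = (∂₁f, ∂₂f, ∂₃f) ∈ A³, and for g = (g₁,g₂,g₃) ∈ A³ let ∇f ∧ g denote the cross product (∂₂f·g₃ − ∂₃f·g₂, ∂₃f·g₁ − ∂₁f·g₃, ∂₁f·g₂ − ∂₂f·g₁). Then {g ∈ A³ : ∇f ∧ g = 0} = {β·∇f : β ∈ A}. -/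
open MvPolynomial

private lemma primeX (s : Fin 3) : Prime (X s : MvPolynomial (Fin 3) ℂ) := by
  let e := ((renameEquiv ℂ (Equiv.swap s 0)).trans (finSuccEquiv ℂ 2)).toRingEquiv.toMulEquiv
  rw [← MulEquiv.prime_iff e]
  have : e (X s) = Polynomial.X := by
    show (finSuccEquiv ℂ 2) (rename (Equiv.swap s 0) (X s)) = Polynomial.X
    rw [rename_X, Equiv.swap_apply_left, finSuccEquiv_X_zero]
  rw [this]
  exact Polynomial.prime_X

private lemma notdvd {s t : Fin 3} (h : t ≠ s) (m : ℕ) :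
    ¬ (X s : MvPolynomial (Fin 3) ℂ) ∣ X t ^ m := by
  intro hd
  obtain ⟨c, hc⟩ := (primeX s).dvd_of_dvd_pow hd
  have h2 := congrArg (eval (fun u => if u = s then (0:ℂ) else 1)) hc
  simp [h] at h2

private lemma xpow_dvd {s t : Fin 3} (h : t ≠ s) {n m : ℕ} {u : MvPolynomial (Fin 3) ℂ}
    (hd : (X s : MvPolynomial (Fin 3) ℂ) ^ n ∣ X t ^ m * u) : (X s) ^ n ∣ u :=
  (primeX s).pow_dvd_of_dvd_mul_left n (notdvd h m) hd

private lemma k1 (p q r : ℕ) (A₁ A₂ A₃ : MvPolynomial (Fin 3) ℂ)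
    (h : X 0 ^ p * A₁ + X 1 ^ q * A₂ + X 2 ^ r * A₃ = 0) :
    ∃ B₁ B₂ B₃ : MvPolynomial (Fin 3) ℂ,
      A₁ = X 1 ^ q * B₃ - X 2 ^ r * B₂ ∧
      A₂ = X 2 ^ r * B₁ - X 0 ^ p * B₃ ∧
      A₃ = X 0 ^ p * B₂ - X 1 ^ q * B₁ := by
  set φ := finSuccEquiv ℂ 2 with hφ
  have hX0 : φ (X 0) = Polynomial.X := finSuccEquiv_X_zero
  have hX1 : φ (X 1) = Polynomial.C (X 0) := by
    have : (1 : Fin 3) = Fin.succ 0 := rfl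
    rw [this, finSuccEquiv_X_succ]
  have hX2 : φ (X 2) = Polynomial.C (X 1) := by
    have : (2 : Fin 3) = Fin.succ 1 := rfl
    rw [this, finSuccEquiv_X_succ]
  set a1 := φ A₁ with ha1
  set q2 := φ A₂ /ₘ (Polynomial.X ^ p) with hq2
  set r2 := φ A₂ %ₘ (Polynomial.X ^ p) with hr2
  set q3 := φ A₃ /ₘ (Polynomial.X ^ p) with hq3
  set r3 := φ A₃ %ₘ (Polynomial.X ^ p) with hr3
  have e2 := Polynomial.modByMonic_add_div (φ A₂) (Polynomial.X ^ p)
  have e3 := Polynomial.modByMonic_add_div (φ A₃) (Polynomial.X ^ p)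
  have hm := congrArg φ h
  simp only [map_add, map_mul, map_pow, map_zero, hX0, hX1, hX2] at hm
  set y := (X 0 : MvPolynomial (Fin 2) ℂ)
  set z := (X 1 : MvPolynomial (Fin 2) ℂ)
  have key : Polynomial.X ^ p * (a1 + Polynomial.C y ^ q * q2 + Polynomial.C z ^ r * q3)
      + (Polynomial.C y ^ q * r2 + Polynomial.C z ^ r * r3) = 0 := by
    linear_combination hm + Polynomial.C y ^ q * e2 + Polynomial.C z ^ r * e3
  have hdegv : (Polynomial.C y ^ q * r2 + Polynomial.C z ^ r * r3).degree
      < (Polynomial.X ^ p : Polynomial (MvPolynomial (Fin 2) ℂ)).degree := by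
    apply lt_of_le_of_lt (Polynomial.degree_add_le _ _)
    apply max_lt
    · calc (Polynomial.C y ^ q * r2).degree ≤ (Polynomial.C y ^ q).degree + r2.degree :=
            Polynomial.degree_mul_le _ _
        _ ≤ 0 + r2.degree := by
            gcongr
            rw [← Polynomial.C_pow]
            exact Polynomial.degree_C_le
        _ = r2.degree := by rw [zero_add]
        _ < _ := Polynomial.degree_modByMonic_lt _ (Polynomial.monic_X_pow p)
    · calc (Polynomial.C z ^ r * r3).degree ≤ (Polynomial.C z ^ r).degree + r3.degree :=
            Polynomial.degree_mul_le _ _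
        _ ≤ 0 + r3.degree := by
            gcongr
            rw [← Polynomial.C_pow]
            exact Polynomial.degree_C_le
        _ = r3.degree := by rw [zero_add]
        _ < _ := Polynomial.degree_modByMonic_lt _ (Polynomial.monic_X_pow p)
  have hu : a1 + Polynomial.C y ^ q * q2 + Polynomial.C z ^ r * q3 = 0 := by
    by_contra hne
    have h1 : Polynomial.X ^ p * (a1 + Polynomial.C y ^ q * q2 + Polynomial.C z ^ r * q3)
        = -(Polynomial.C y ^ q * r2 + Polynomial.C z ^ r * r3) := by linear_combination key
    have hdl : (Polynomial.X ^ p * (a1 + Polynomial.C y ^ q * q2 + Polynomial.C z ^ r * q3)).degree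
        = (Polynomial.X ^ p : Polynomial (MvPolynomial (Fin 2) ℂ)).degree
          + (a1 + Polynomial.C y ^ q * q2 + Polynomial.C z ^ r * q3).degree :=
      Polynomial.degree_mul
    rw [h1, Polynomial.degree_neg] at hdl
    have : (Polynomial.X ^ p : Polynomial (MvPolynomial (Fin 2) ℂ)).degree ≤
        (Polynomial.C y ^ q * r2 + Polynomial.C z ^ r * r3).degree := by
      rw [hdl]
      exact le_add_of_nonneg_right (Polynomial.zero_le_degree_iff.2 hne)
    exact absurd hdegv (not_lt.2 this)
  have hv : Polynomial.C y ^ q * r2 + Polynomial.C z ^ r * r3 = 0 := by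
    linear_combination key - Polynomial.X ^ p * hu
  have hsX : φ.symm Polynomial.X = X 0 := by rw [← hX0, AlgEquiv.symm_apply_apply]
  have hsY : φ.symm (Polynomial.C y) = X 1 := by rw [← hX1, AlgEquiv.symm_apply_apply]
  have hsZ : φ.symm (Polynomial.C z) = X 2 := by rw [← hX2, AlgEquiv.symm_apply_apply]
  set Q₂ := φ.symm q2
  set Q₃ := φ.symm q3
  set R₂ := φ.symm r2
  set R₃ := φ.symm r3
  have hA₂ : A₂ = X 0 ^ p * Q₂ + R₂ := by
    have := congrArg φ.symm e2
    simp only [map_add, map_mul, map_pow, hsX, AlgEquiv.symm_apply_apply] at this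
    linear_combination -this
  have hA₃ : A₃ = X 0 ^ p * Q₃ + R₃ := by
    have := congrArg φ.symm e3
    simp only [map_add, map_mul, map_pow, hsX, AlgEquiv.symm_apply_apply] at this
    linear_combination -this
  have hu' : A₁ + X 1 ^ q * Q₂ + X 2 ^ r * Q₃ = 0 := by
    have := congrArg φ.symm hu
    simp only [map_add, map_mul, map_pow, map_zero, hsY, hsZ, AlgEquiv.symm_apply_apply, ha1] at this
    exact this
  have hv' : X 1 ^ q * R₂ + X 2 ^ r * R₃ = 0 := by
    have := congrArg φ.symm hv
    simp only [map_add, map_mul, map_pow, map_zero, hsY, hsZ, AlgEquiv.symm_apply_apply] at this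
    exact this
  obtain ⟨c, hc⟩ : (X 2 : MvPolynomial (Fin 3) ℂ) ^ r ∣ R₂ := by
    apply xpow_dvd (show (1 : Fin 3) ≠ 2 by decide) (m := q)
    exact ⟨-R₃, by linear_combination hv'⟩
  have hR₃ : R₃ = -(X 1 ^ q * c) := by
    have hx : (X 2 : MvPolynomial (Fin 3) ℂ) ^ r ≠ 0 := pow_ne_zero _ (X_ne_zero _)
    apply mul_left_cancel₀ hx
    linear_combination hv' - X 1 ^ q * hc
  exact ⟨c, Q₃, -Q₂, by linear_combination hu', by linear_combination hA₂ + hc,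
    by linear_combination hA₃ + hR₃⟩

set_option maxHeartbeats 2000000

/-- For `2 ≤ i ≤ j ≤ k`, nonzero `a₁, a₂, a₃ ∈ ℂ`,
`f = a₁z₁^i + a₂z₂^j + a₃z₃^k` and `A = ℂ[z₁,z₂,z₃]/⟨f⟩`, with
`∇f ∧ g` the cross product of `∇f = (∂₁f,∂₂f,∂₃f)` with `g`, one has
`{g ∈ A³ : ∇f ∧ g = 0} = {β·∇f : β ∈ A}`. -/
theorem stmt_13 (i j k : ℕ) (hi : 2 ≤ i) (hij : i ≤ j) (hjk : j ≤ k)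
    (a₁ a₂ a₃ : ℂ) (ha₁ : a₁ ≠ 0) (ha₂ : a₂ ≠ 0) (ha₃ : a₃ ≠ 0)
    (f : MvPolynomial (Fin 3) ℂ)
    (hf : f = C a₁ * X 0 ^ i + C a₂ * X 1 ^ j + C a₃ * X 2 ^ k)
    (π : MvPolynomial (Fin 3) ℂ →+* (MvPolynomial (Fin 3) ℂ ⧸ Ideal.span {f}))
    (hπ : π = Ideal.Quotient.mk (Ideal.span {f})) :
    {g : (MvPolynomial (Fin 3) ℂ ⧸ Ideal.span {f}) × (MvPolynomial (Fin 3) ℂ ⧸ Ideal.span {f}) ×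
        (MvPolynomial (Fin 3) ℂ ⧸ Ideal.span {f}) |
        π (pderiv 1 f) * g.2.2 - π (pderiv 2 f) * g.2.1 = 0 ∧
        π (pderiv 2 f) * g.1 - π (pderiv 0 f) * g.2.2 = 0 ∧
        π (pderiv 0 f) * g.2.1 - π (pderiv 1 f) * g.1 = 0} =
      {g | ∃ β : MvPolynomial (Fin 3) ℂ ⧸ Ideal.span {f},
        g = β • (π (pderiv 0 f), π (pderiv 1 f), π (pderiv 2 f))} := by
  subst hπ
  have h10 : (1 : Fin 3) ≠ 0 := by decide
  have h20 : (2 : Fin 3) ≠ 0 := by decide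
  have h01 : (0 : Fin 3) ≠ 1 := by decide
  have h21 : (2 : Fin 3) ≠ 1 := by decide
  have h02 : (0 : Fin 3) ≠ 2 := by decide
  have h12 : (1 : Fin 3) ≠ 2 := by decide
  have hd₀ : pderiv 0 f = C (a₁ * i) * X 0 ^ (i-1) := by
    subst hf
    simp [pderiv_pow, pderiv_X_of_ne h10, pderiv_X_of_ne h20]
    ring
  have hd₁ : pderiv 1 f = C (a₂ * j) * X 1 ^ (j-1) := by
    subst hf
    simp [pderiv_pow, pderiv_X_of_ne h01, pderiv_X_of_ne h21]
    ring
  have hd₂ : pderiv 2 f = C (a₃ * k) * X 2 ^ (k-1) := by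
    subst hf
    simp [pderiv_pow, pderiv_X_of_ne h02, pderiv_X_of_ne h12]
    ring
  have hine : (i : ℂ) ≠ 0 := Nat.cast_ne_zero.2 (by omega)
  have hjne : (j : ℂ) ≠ 0 := Nat.cast_ne_zero.2 (by omega)
  have hkne : (k : ℂ) ≠ 0 := Nat.cast_ne_zero.2 (by omega)
  have hc₀ : (a₁ * i) ≠ 0 := mul_ne_zero ha₁ hine
  have hc₁ : (a₂ * j) ≠ 0 := mul_ne_zero ha₂ hjne
  have hc₂ : (a₃ * k) ≠ 0 := mul_ne_zero ha₃ hkne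
  have hC₀ : (C (a₁ * i) : MvPolynomial (Fin 3) ℂ) ≠ 0 := by
    rw [Ne, C_eq_zero]; exact hc₀
  have hC₁ : (C (a₂ * j) : MvPolynomial (Fin 3) ℂ) ≠ 0 := by
    rw [Ne, C_eq_zero]; exact hc₁
  have hC₂ : (C (a₃ * k) : MvPolynomial (Fin 3) ℂ) ≠ 0 := by
    rw [Ne, C_eq_zero]; exact hc₂
  set γ₀ : MvPolynomial (Fin 3) ℂ := C ((a₁ * i)⁻¹) with hγ₀def
  set γ₁ : MvPolynomial (Fin 3) ℂ := C ((a₂ * j)⁻¹) with hγ₁def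
  set γ₂ : MvPolynomial (Fin 3) ℂ := C ((a₃ * k)⁻¹) with hγ₂def
  have hγ₀ : γ₀ * C (a₁ * i) = 1 := by
    rw [hγ₀def, ← C_mul, inv_mul_cancel₀ hc₀, C_1]
  have hγ₁ : γ₁ * C (a₂ * j) = 1 := by
    rw [hγ₁def, ← C_mul, inv_mul_cancel₀ hc₁, C_1]
  have hγ₂ : γ₂ * C (a₃ * k) = 1 := by
    rw [hγ₂def, ← C_mul, inv_mul_cancel₀ hc₂, C_1]
  have hfz : Ideal.Quotient.mk (Ideal.span {f}) f = 0 :=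
    Ideal.Quotient.eq_zero_iff_mem.2 (Ideal.mem_span_singleton_self f)
  have hfne : f ≠ 0 := by
    intro h0
    have := congrArg (eval (fun t : Fin 3 => if t = 0 then (1:ℂ) else 0)) (h0 ▸ hf)
    simp [zero_pow (show j ≠ 0 by omega), zero_pow (show k ≠ 0 by omega),
      zero_pow (show i ≠ 0 by omega)] at this
    exact ha₁ this.symm
  ext g
  simp only [Set.mem_setOf_eq]
  constructor
  · rintro ⟨h1, h2, h3⟩
    obtain ⟨G₁, hG₁⟩ := Ideal.Quotient.mk_surjective g.1
    obtain ⟨G₂, hG₂⟩ := Ideal.Quotient.mk_surjective g.2.1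
    obtain ⟨G₃, hG₃⟩ := Ideal.Quotient.mk_surjective g.2.2
    obtain ⟨A₁, hA₁⟩ : f ∣ pderiv 1 f * G₃ - pderiv 2 f * G₂ := by
      rw [← Ideal.mem_span_singleton, ← Ideal.Quotient.eq_zero_iff_mem]
      rw [map_sub, map_mul, map_mul, hG₃, hG₂]
      exact h1
    obtain ⟨A₂, hA₂⟩ : f ∣ pderiv 2 f * G₁ - pderiv 0 f * G₃ := by
      rw [← Ideal.mem_span_singleton, ← Ideal.Quotient.eq_zero_iff_mem]
      rw [map_sub, map_mul, map_mul, hG₁, hG₃]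
      exact h2
    obtain ⟨A₃, hA₃⟩ : f ∣ pderiv 0 f * G₂ - pderiv 1 f * G₁ := by
      rw [← Ideal.mem_span_singleton, ← Ideal.Quotient.eq_zero_iff_mem]
      rw [map_sub, map_mul, map_mul, hG₂, hG₁]
      exact h3
    have hdot : pderiv 0 f * A₁ + pderiv 1 f * A₂ + pderiv 2 f * A₃ = 0 := by
      have hm : f * (pderiv 0 f * A₁ + pderiv 1 f * A₂ + pderiv 2 f * A₃) = 0 := by
        linear_combination -(pderiv 0 f * hA₁ + pderiv 1 f * hA₂ + pderiv 2 f * hA₃)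
      rcases mul_eq_zero.1 hm with h | h
      · exact absurd h hfne
      · exact h
    rw [hd₀, hd₁, hd₂] at hdot
    rw [hd₁, hd₂] at hA₁
    rw [hd₂, hd₀] at hA₂
    rw [hd₀, hd₁] at hA₃
    obtain ⟨B₁, B₂, B₃, hO₁, hO₂, hO₃⟩ :=
      k1 (i-1) (j-1) (k-1) (C (a₁ * i) * A₁) (C (a₂ * j) * A₂) (C (a₃ * k) * A₃)
        (by linear_combination hdot)
    set W₁ : MvPolynomial (Fin 3) ℂ := γ₁ * γ₂ * B₁ with hW₁def
    set W₂ : MvPolynomial (Fin 3) ℂ := γ₀ * γ₂ * B₂ with hW₂def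
    set W₃ : MvPolynomial (Fin 3) ℂ := γ₀ * γ₁ * B₃ with hW₃def
    have e2' : C (a₃ * k) * X 2 ^ (k-1) * (G₁ - f * W₁)
        = C (a₁ * i) * X 0 ^ (i-1) * (G₃ - f * W₃) := by
      rw [hW₁def, hW₃def]
      linear_combination hA₂ - (f*A₂)*hγ₁ + (f*γ₁)*hO₂ - (f*γ₁*X 2 ^ (k-1)*B₁)*hγ₂
        + (f*γ₁*X 0 ^ (i-1)*B₃)*hγ₀
    have e3' : C (a₁ * i) * X 0 ^ (i-1) * (G₂ - f * W₂)
        = C (a₂ * j) * X 1 ^ (j-1) * (G₁ - f * W₁) := by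
      rw [hW₁def, hW₂def]
      linear_combination hA₃ - (f*A₃)*hγ₂ + (f*γ₂)*hO₃ - (f*γ₂*X 0 ^ (i-1)*B₂)*hγ₀
        + (f*γ₂*X 1 ^ (j-1)*B₁)*hγ₁
    obtain ⟨δ, hδ⟩ : (X 0 : MvPolynomial (Fin 3) ℂ) ^ (i-1) ∣ C (a₃ * k) * (G₁ - f * W₁) := by
      apply xpow_dvd (show (2 : Fin 3) ≠ 0 by decide) (m := k-1)
      exact ⟨C (a₁ * i) * (G₃ - f * W₃), by linear_combination e2'⟩
    have hxp : (X 0 : MvPolynomial (Fin 3) ℂ) ^ (i-1) ≠ 0 := pow_ne_zero _ (X_ne_zero _)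
    have hH₃ : C (a₁ * i) * (G₃ - f * W₃) = X 2 ^ (k-1) * δ := by
      apply mul_left_cancel₀ hxp
      linear_combination (X 2 ^ (k-1)) * hδ - e2'
    have hH₂ : C (a₁ * i) * (C (a₃ * k) * (G₂ - f * W₂)) = C (a₂ * j) * X 1 ^ (j-1) * δ := by
      apply mul_left_cancel₀ hxp
      linear_combination C (a₃ * k) * e3' + C (a₂ * j) * X 1 ^ (j-1) * hδ
    have key1 : G₁ - (γ₀ * γ₂ * δ) * pderiv 0 f = f * W₁ := by
      apply mul_left_cancel₀ hC₂
      rw [hd₀]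
      linear_combination hδ - (X 0 ^ (i-1) * δ * γ₂ * C (a₃ * k)) * hγ₀ - (X 0 ^ (i-1) * δ) * hγ₂
    have key3 : G₃ - (γ₀ * γ₂ * δ) * pderiv 2 f = f * W₃ := by
      apply mul_left_cancel₀ hC₀
      rw [hd₂]
      linear_combination hH₃ - (X 2 ^ (k-1) * δ * γ₂ * C (a₃ * k)) * hγ₀ - (X 2 ^ (k-1) * δ) * hγ₂
    have key2 : G₂ - (γ₀ * γ₂ * δ) * pderiv 1 f = f * W₂ := by
      apply mul_left_cancel₀ hC₀
      apply mul_left_cancel₀ hC₂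
      rw [hd₁]
      linear_combination hH₂ - (C (a₂ * j) * X 1 ^ (j-1) * δ * γ₂ * C (a₃ * k)) * hγ₀
        - (C (a₂ * j) * X 1 ^ (j-1) * δ) * hγ₂
    refine ⟨Ideal.Quotient.mk (Ideal.span {f}) (γ₀ * γ₂ * δ), ?_⟩
    have q1 : g.1 = Ideal.Quotient.mk (Ideal.span {f}) (γ₀ * γ₂ * δ)
        * Ideal.Quotient.mk (Ideal.span {f}) (pderiv 0 f) := by
      rw [← hG₁]
      conv_lhs => rw [show G₁ = (γ₀ * γ₂ * δ) * pderiv 0 f + f * W₁ from by linear_combination key1]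
      simp only [map_add, map_mul, hfz, zero_mul, add_zero]
    have q2 : g.2.1 = Ideal.Quotient.mk (Ideal.span {f}) (γ₀ * γ₂ * δ)
        * Ideal.Quotient.mk (Ideal.span {f}) (pderiv 1 f) := by
      rw [← hG₂]
      conv_lhs => rw [show G₂ = (γ₀ * γ₂ * δ) * pderiv 1 f + f * W₂ from by linear_combination key2]
      simp only [map_add, map_mul, hfz, zero_mul, add_zero]
    have q3 : g.2.2 = Ideal.Quotient.mk (Ideal.span {f}) (γ₀ * γ₂ * δ)
        * Ideal.Quotient.mk (Ideal.span {f}) (pderiv 2 f) := by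
      rw [← hG₃]
      conv_lhs => rw [show G₃ = (γ₀ * γ₂ * δ) * pderiv 2 f + f * W₃ from by linear_combination key3]
      simp only [map_add, map_mul, hfz, zero_mul, add_zero]
    have hgg : g = (g.1, g.2.1, g.2.2) := rfl
    rw [hgg, q1, q2, q3, Prod.smul_mk, Prod.smul_mk, smul_eq_mul, smul_eq_mul, smul_eq_mul]
  · rintro ⟨β, rfl⟩
    refine ⟨?_, ?_, ?_⟩ <;>
    · simp only [Prod.smul_fst, Prod.smul_snd, smul_eq_mul]
      ring
end

section
/- Let 2 ≤ i ≤ j ≤ k, a₁, a₂, a₃ ∈ ℂ∖{0}, f = a₁z₁^i + a₂z₂^j + a₃z₃^k ∈ ℂ[z₁,z₂,z₃], and A := ℂ[z₁,z₂,z₃]/⟨f⟩. Let N := {g ∈ A³ : g₁∂₁f + g₂∂₂f + g₃∂₃f = 0 in A} and let M := {∇f ∧ h : h ∈ A³}, where ∇f ∧ h denotes the cross product (∂₂f·h₃ − ∂₃f·h₂, ∂₃f·h₁ − ∂₁f·h₃, ∂₁f·h₂ − ∂₂f·h₁). Then M ⊆ N and the quotient ℂ-vector space N/M has dimension (i−1)(j−1)(k−1).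 -/
open MvPolynomial

noncomputable abbrev Stmt14.R3 := MvPolynomial (Fin 3) ℂ

namespace Stmt14

lemma mem_monIdeal {S : Set (Fin 3 →₀ ℕ)} {p : R3} :
    p ∈ Ideal.span ((fun d => (monomial d (1:ℂ) : R3)) '' S) ↔
      ∀ d ∈ p.support, ∃ e ∈ S, e ≤ d := by
  classical
  constructor
  · intro hp
    refine Submodule.span_induction ?_ ?_ ?_ ?_ hp
    · rintro x ⟨e, he, rfl⟩ d hd
      have := support_monomial_subset hd
      simp only [Finset.mem_singleton] at this
      exact ⟨e, he, this ▸ le_refl _⟩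
    · simp
    · intro x y _ _ hx hy d hd
      rcases Finset.mem_union.1 (MvPolynomial.support_add hd) with h | h
      exacts [hx d h, hy d h]
    · intro r x _ hx d hd
      have := support_mul r x hd
      rw [Finset.mem_add] at this
      obtain ⟨d1, hd1, d2, hd2, rfl⟩ := this
      obtain ⟨e, he, hle⟩ := hx d2 hd2
      exact ⟨e, he, hle.trans (le_add_self)⟩
  · intro h
    rw [p.as_sum]
    refine Submodule.sum_mem _ fun d hd => ?_
    obtain ⟨e, he, hle⟩ := h d hd
    have : (monomial d (coeff d p) : R3) = monomial e 1 * monomial (d - e) (coeff d p) := by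
      rw [monomial_mul, one_mul, add_tsub_cancel_of_le hle]
    rw [this]
    exact Ideal.mul_mem_right _ _ (Ideal.subset_span ⟨e, he, rfl⟩)

lemma support_pow_mul {v : Fin 3} {n : ℕ} {p : R3} {d : Fin 3 →₀ ℕ}
    (hd : d ∈ p.support) : Finsupp.single v n + d ∈ (X v ^ n * p).support := by
  rw [mem_support_iff] at hd ⊢
  rw [X_pow_eq_monomial, coeff_monomial_mul, one_mul]
  exact hd

lemma reg0 {a b c : ℕ} {p : R3}
    (h : X 0 ^ a * p ∈ Ideal.span ((fun d => (monomial d (1:ℂ) : R3)) ''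
      {Finsupp.single 1 b, Finsupp.single 2 c})) :
    p ∈ Ideal.span ((fun d => (monomial d (1:ℂ) : R3)) ''
      {Finsupp.single 1 b, Finsupp.single 2 c}) := by
  rw [mem_monIdeal] at h ⊢
  intro d hd
  obtain ⟨e, he, hle⟩ := h _ (support_pow_mul (v := 0) (n := a) hd)
  refine ⟨e, he, ?_⟩
  rcases he with rfl | rfl <;>
  · rw [Finsupp.single_le_iff] at hle ⊢
    simpa [Finsupp.single_apply] using hle

lemma dvd2 {b c : ℕ} {p q : R3} (h : X 1 ^ b * p = X 2 ^ c * q) : X 2 ^ c ∣ p := by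
  have hq : X 2 ^ c * q ∈ Ideal.span ((fun d => (monomial d (1:ℂ) : R3)) ''
      {Finsupp.single 2 c}) := by
    rw [Set.image_singleton]
    exact Ideal.mem_span_singleton.2 ⟨q, by rw [X_pow_eq_monomial]⟩
  rw [← h, mem_monIdeal] at hq
  have hp : p ∈ Ideal.span ((fun d => (monomial d (1:ℂ) : R3)) '' {Finsupp.single 2 c}) := by
    rw [mem_monIdeal]
    intro d hd
    obtain ⟨e, he, hle⟩ := hq _ (support_pow_mul (v := 1) (n := b) hd)
    refine ⟨e, he, ?_⟩
    rcases Set.mem_singleton_iff.1 he with rfl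
    rw [Finsupp.single_le_iff] at hle ⊢
    simpa [Finsupp.single_apply] using hle
  rw [Set.image_singleton, ← X_pow_eq_monomial] at hp
  exact Ideal.mem_span_singleton.1 hp

lemma syzygy {u₁ u₂ u₃ : ℂ} (h₁ : u₁ ≠ 0) (h₂ : u₂ ≠ 0) (h₃ : u₃ ≠ 0) {a b c : ℕ}
    {p₁ p₂ p₃ : R3}
    (h : p₁ * (C u₁ * X 0 ^ a) + p₂ * (C u₂ * X 1 ^ b) + p₃ * (C u₃ * X 2 ^ c) = 0) :
    ∃ w₁ w₂ w₃ : R3,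
      p₁ = (C u₂ * X 1 ^ b) * w₃ - (C u₃ * X 2 ^ c) * w₂ ∧
      p₂ = (C u₃ * X 2 ^ c) * w₁ - (C u₁ * X 0 ^ a) * w₃ ∧
      p₃ = (C u₁ * X 0 ^ a) * w₂ - (C u₂ * X 1 ^ b) * w₁ := by
  set g₁ : R3 := C u₁ * X 0 ^ a with hg₁
  set g₂ : R3 := C u₂ * X 1 ^ b with hg₂
  set g₃ : R3 := C u₃ * X 2 ^ c with hg₃
  have hmem : X 0 ^ a * (C u₁ * p₁) ∈ Ideal.span ((fun d => (monomial d (1:ℂ) : R3)) ''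
      {Finsupp.single 1 b, Finsupp.single 2 c}) := by
    rw [Set.image_insert_eq, Set.image_singleton, Ideal.mem_span_pair]
    refine ⟨-p₂ * C u₂, -p₃ * C u₃, ?_⟩
    rw [← X_pow_eq_monomial, ← X_pow_eq_monomial]
    linear_combination -h
  have hp₁ := reg0 hmem
  rw [Set.image_insert_eq, Set.image_singleton, Ideal.mem_span_pair] at hp₁
  obtain ⟨x, y, hxy⟩ := hp₁
  rw [← X_pow_eq_monomial, ← X_pow_eq_monomial] at hxy
  set B₂ : R3 := C (u₁⁻¹ * u₂⁻¹) * x with hB₂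
  set B₃ : R3 := C (u₁⁻¹ * u₃⁻¹) * y with hB₃
  have hp1 : p₁ = B₂ * g₂ + B₃ * g₃ := by
    have : p₁ = C u₁⁻¹ * (C u₁ * p₁) := by
      rw [← mul_assoc, ← C_mul, inv_mul_cancel₀ h₁, C_1, one_mul]
    have hC2 : (C u₂⁻¹ : R3) * C u₂ = 1 := by rw [← C_mul, inv_mul_cancel₀ h₂, C_1]
    have hC3 : (C u₃⁻¹ : R3) * C u₃ = 1 := by rw [← C_mul, inv_mul_cancel₀ h₃, C_1]
    rw [this, ← hxy, hB₂, hB₃, hg₂, hg₃]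
    simp only [C_mul]
    linear_combination (-(C u₁⁻¹ * x * X 1 ^ b : R3)) * hC2 - (C u₁⁻¹ * y * X 2 ^ c : R3) * hC3
  set q₂ : R3 := p₂ + B₂ * g₁ with hq₂
  set q₃ : R3 := p₃ + B₃ * g₁ with hq₃
  have hrel : g₂ * q₂ + g₃ * q₃ = 0 := by
    rw [hq₂, hq₃]
    linear_combination h - g₁ * hp1
  have hdvd : X 2 ^ c ∣ C u₂ * q₂ := by
    refine dvd2 (b := b) (q := C u₃ * (-q₃)) ?_
    linear_combination hrel
  obtain ⟨t₀, ht₀⟩ := hdvd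
  set t : R3 := C (u₂⁻¹ * u₃⁻¹) * t₀ with ht
  have hq2 : q₂ = g₃ * t := by
    have : q₂ = C u₂⁻¹ * (C u₂ * q₂) := by
      rw [← mul_assoc, ← C_mul, inv_mul_cancel₀ h₂, C_1, one_mul]
    have hC3 : (C u₃⁻¹ : R3) * C u₃ = 1 := by rw [← C_mul, inv_mul_cancel₀ h₃, C_1]
    rw [this, ht₀, ht, hg₃]
    simp only [C_mul]
    linear_combination (-(C u₂⁻¹ * X 2 ^ c * t₀ : R3)) * hC3
  have hq3 : q₃ = -(g₂ * t) := by
    have hg₃0 : g₃ ≠ 0 := by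
      rw [hg₃]
      exact mul_ne_zero (fun hC => h₃ (by simpa using (C_eq_zero (a := u₃)).1 hC))
        (pow_ne_zero _ (X_ne_zero 2))
    have : g₃ * q₃ = g₃ * (-(g₂ * t)) := by linear_combination hrel - g₂ * hq2
    exact mul_left_cancel₀ hg₃0 this
  refine ⟨t, -B₃, B₂, by linear_combination hp1, ?_, ?_⟩
  · have : p₂ = q₂ - B₂ * g₁ := by rw [hq₂]; ring
    rw [this, hq2]; ring
  · have : p₃ = q₃ - B₃ * g₁ := by rw [hq₃]; ring
    rw [this, hq3]; ring

noncomputable def Dm {a b c : ℕ} (t : Fin a × Fin b × Fin c) : Fin 3 →₀ ℕ :=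
  Finsupp.single 0 t.1.val + Finsupp.single 1 t.2.1.val + Finsupp.single 2 t.2.2.val

lemma Dm_apply0 {a b c : ℕ} (t : Fin a × Fin b × Fin c) : Dm t 0 = t.1.val := by
  simp [Dm, Finsupp.single_apply]
lemma Dm_apply1 {a b c : ℕ} (t : Fin a × Fin b × Fin c) : Dm t 1 = t.2.1.val := by
  simp [Dm, Finsupp.single_apply]
lemma Dm_apply2 {a b c : ℕ} (t : Fin a × Fin b × Fin c) : Dm t 2 = t.2.2.val := by
  simp [Dm, Finsupp.single_apply]

lemma finsupp_fin3 (d : Fin 3 →₀ ℕ) :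
    d = Finsupp.single 0 (d 0) + Finsupp.single 1 (d 1) + Finsupp.single 2 (d 2) := by
  ext x
  fin_cases x <;> simp [Finsupp.single_apply]

lemma Dm_inj {a b c : ℕ} {t t' : Fin a × Fin b × Fin c} (h : Dm t = Dm t') : t = t' := by
  have h0 := congrArg (fun d => d 0) h
  have h1 := congrArg (fun d => d 1) h
  have h2 := congrArg (fun d => d 2) h
  simp only [Dm_apply0, Dm_apply1, Dm_apply2] at h0 h1 h2
  exact Prod.ext (Fin.ext h0) (Prod.ext (Fin.ext h1) (Fin.ext h2))

noncomputable def Phi (a b c : ℕ) : R3 →ₗ[ℂ] (Fin a × Fin b × Fin c → ℂ) where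
  toFun r := fun t => coeff (Dm t) r
  map_add' r s := by funext t; simp [coeff_add]
  map_smul' m r := by funext t; simp [coeff_smul]

lemma Phi_surj (a b c : ℕ) : Function.Surjective (Phi a b c) := by
  intro w
  classical
  refine ⟨∑ t : Fin a × Fin b × Fin c, monomial (Dm t) (w t), ?_⟩
  funext t'
  show coeff (Dm t') (∑ t : Fin a × Fin b × Fin c, monomial (Dm t) (w t)) = w t'
  rw [coeff_sum, Finset.sum_eq_single t']
  · simp [coeff_monomial]
  · intro t _ hne
    rw [coeff_monomial, if_neg (fun h => hne (Dm_inj h))]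
  · intro h
    exact absurd (Finset.mem_univ t') h

lemma Phi_eq_zero_iff {a b c : ℕ} {r : R3} :
    Phi a b c r = 0 ↔ ∀ d ∈ r.support, (a ≤ d 0 ∨ b ≤ d 1 ∨ c ≤ d 2) := by
  constructor
  · intro h d hd
    by_contra hcon
    push_neg at hcon
    obtain ⟨h0, h1, h2⟩ := hcon
    have : coeff d r = 0 := by
      have := congrFun h (⟨d 0, h0⟩, ⟨d 1, h1⟩, ⟨d 2, h2⟩)
      simpa [Phi, Dm, ← finsupp_fin3 d] using this
    exact (mem_support_iff.1 hd) this
  · intro h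
    funext t
    show coeff (Dm t) r = 0
    by_contra hc
    rcases h _ (mem_support_iff.2 hc) with h' | h' | h' <;>
      [rw [Dm_apply0] at h'; rw [Dm_apply1] at h'; rw [Dm_apply2] at h'] <;>
      [exact absurd h' (Nat.not_le.2 t.1.isLt); exact absurd h' (Nat.not_le.2 t.2.1.isLt);
       exact absurd h' (Nat.not_le.2 t.2.2.isLt)]

end Stmt14

set_option maxHeartbeats 2000000 in
set_option synthInstance.maxHeartbeats 1000000 in
/-- For `2 ≤ i ≤ j ≤ k`, nonzero `a₁, a₂, a₃ ∈ ℂ`,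
`f = a₁z₁^i + a₂z₂^j + a₃z₃^k` and `A = ℂ[z₁,z₂,z₃]/⟨f⟩`, with
`N = {g ∈ A³ : g·∇f = 0}` and `M = {∇f ∧ h : h ∈ A³}` (cross product),
one has `M ⊆ N` and `dim_ℂ N/M = (i−1)(j−1)(k−1)`. -/
theorem stmt_14 (i j k : ℕ) (hi : 2 ≤ i) (hij : i ≤ j) (hjk : j ≤ k)
    (a₁ a₂ a₃ : ℂ) (ha₁ : a₁ ≠ 0) (ha₂ : a₂ ≠ 0) (ha₃ : a₃ ≠ 0)
    (f : MvPolynomial (Fin 3) ℂ)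
    (hf : f = C a₁ * X 0 ^ i + C a₂ * X 1 ^ j + C a₃ * X 2 ^ k)
    (π : MvPolynomial (Fin 3) ℂ →+* (MvPolynomial (Fin 3) ℂ ⧸ Ideal.span {f}))
    (hπ : π = Ideal.Quotient.mk (Ideal.span {f}))
    (N M : Submodule (MvPolynomial (Fin 3) ℂ ⧸ Ideal.span {f})
      ((MvPolynomial (Fin 3) ℂ ⧸ Ideal.span {f}) × (MvPolynomial (Fin 3) ℂ ⧸ Ideal.span {f}) ×
        (MvPolynomial (Fin 3) ℂ ⧸ Ideal.span {f})))
    (hN : ∀ g, g ∈ N ↔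
      g.1 * π (pderiv 0 f) + g.2.1 * π (pderiv 1 f) + g.2.2 * π (pderiv 2 f) = 0)
    (hM : ∀ x, x ∈ M ↔ ∃ h :
        (MvPolynomial (Fin 3) ℂ ⧸ Ideal.span {f}) × (MvPolynomial (Fin 3) ℂ ⧸ Ideal.span {f}) ×
          (MvPolynomial (Fin 3) ℂ ⧸ Ideal.span {f}),
      x = (π (pderiv 1 f) * h.2.2 - π (pderiv 2 f) * h.2.1,
           π (pderiv 2 f) * h.1 - π (pderiv 0 f) * h.2.2,
           π (pderiv 0 f) * h.2.1 - π (pderiv 1 f) * h.1)) :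
    M ≤ N ∧
    Module.finrank ℂ
      (↥(N.restrictScalars ℂ) ⧸
        Submodule.comap (N.restrictScalars ℂ).subtype (M.restrictScalars ℂ)) =
      (i - 1) * (j - 1) * (k - 1) := by
  classical
  subst hπ
  open Stmt14 in
  -- part 1 : M ≤ N
  have hMN : M ≤ N := by
    intro x hx
    rw [hM] at hx
    obtain ⟨h, rfl⟩ := hx
    rw [hN]
    ring
  refine ⟨hMN, ?_⟩
  set Iπ := Ideal.Quotient.mk (Ideal.span {f}) with hIπ
  -- basic nonvanishing
  have hi0 : (i:ℂ) ≠ 0 := Nat.cast_ne_zero.2 (by omega)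
  have hj0 : (j:ℂ) ≠ 0 := Nat.cast_ne_zero.2 (by omega)
  have hk0 : (k:ℂ) ≠ 0 := Nat.cast_ne_zero.2 (by omega)
  have hu₁ : a₁ * (i:ℂ) ≠ 0 := mul_ne_zero ha₁ hi0
  have hu₂ : a₂ * (j:ℂ) ≠ 0 := mul_ne_zero ha₂ hj0
  have hu₃ : a₃ * (k:ℂ) ≠ 0 := mul_ne_zero ha₃ hk0
  set g₁ : Stmt14.R3 := C (a₁ * i) * X 0 ^ (i-1) with hg₁def
  set g₂ : Stmt14.R3 := C (a₂ * j) * X 1 ^ (j-1) with hg₂def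
  set g₃ : Stmt14.R3 := C (a₃ * k) * X 2 ^ (k-1) with hg₃def
  set e₁ : Stmt14.R3 := C ((i:ℂ))⁻¹ * X 0 with he₁def
  set e₂ : Stmt14.R3 := C ((j:ℂ))⁻¹ * X 1 with he₂def
  set e₃ : Stmt14.R3 := C ((k:ℂ))⁻¹ * X 2 with he₃def
  have hd0 : pderiv 0 f = g₁ := by
    rw [hf, hg₁def]; simp [pderiv_C_mul, pderiv_pow, C_mul]; ring
  have hd1 : pderiv 1 f = g₂ := by
    rw [hf, hg₂def]; simp [pderiv_C_mul, pderiv_pow, C_mul]; ring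
  have hd2 : pderiv 2 f = g₃ := by
    rw [hf, hg₃def]; simp [pderiv_C_mul, pderiv_pow, C_mul]; ring
  -- Euler identity
  have hii : i - 1 + 1 = i := by omega
  have hjj : j - 1 + 1 = j := by omega
  have hkk : k - 1 + 1 = k := by omega
  have hx0 : (X 0 : Stmt14.R3) ^ (i-1) * X 0 = X 0 ^ i := by rw [← pow_succ, hii]
  have hx1 : (X 1 : Stmt14.R3) ^ (j-1) * X 1 = X 1 ^ j := by rw [← pow_succ, hjj]
  have hx2 : (X 2 : Stmt14.R3) ^ (k-1) * X 2 = X 2 ^ k := by rw [← pow_succ, hkk]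
  have hc0 : (C ((i:ℂ))⁻¹ : Stmt14.R3) * C (a₁ * i) = C a₁ := by
    rw [← C_mul]; congr 1; field_simp
  have hc1 : (C ((j:ℂ))⁻¹ : Stmt14.R3) * C (a₂ * j) = C a₂ := by
    rw [← C_mul]; congr 1; field_simp
  have hc2 : (C ((k:ℂ))⁻¹ : Stmt14.R3) * C (a₃ * k) = C a₃ := by
    rw [← C_mul]; congr 1; field_simp
  have euler : e₁ * g₁ + e₂ * g₂ + e₃ * g₃ = f := by
    rw [he₁def, he₂def, he₃def, hg₁def, hg₂def, hg₃def, hf]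
    linear_combination (X 0 ^ (i-1) * X 0 : Stmt14.R3) * hc0 + C a₁ * hx0 +
      (X 1 ^ (j-1) * X 1 : Stmt14.R3) * hc1 + C a₂ * hx1 +
      (X 2 ^ (k-1) * X 2 : Stmt14.R3) * hc2 + C a₃ * hx2
  have hπf : Iπ f = 0 :=
    Ideal.Quotient.eq_zero_iff_mem.2 (Ideal.subset_span (Set.mem_singleton f))
  have keyπ : ∀ u v w : Stmt14.R3, u - v = f * w → Iπ u = Iπ v := by
    intro u v w huv
    have : Iπ (u - v) = Iπ (f * w) := congrArg Iπ huv
    rw [map_sub, map_mul, hπf, zero_mul, sub_eq_zero] at this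
    exact this
  -- f ≠ 0
  have hf0 : f ≠ 0 := by
    intro h0
    rw [hf] at h0
    have := congrArg (coeff (Finsupp.single 0 i)) h0
    rw [coeff_add, coeff_add, coeff_zero, coeff_C_mul, coeff_C_mul, coeff_C_mul,
      coeff_X_pow, coeff_X_pow, coeff_X_pow, if_pos rfl, if_neg, if_neg] at this
    · simp at this; exact ha₁ this
    · intro h
      have := (Finsupp.single_eq_single_iff _ _ _ _).1 h
      omega
    · intro h
      have := (Finsupp.single_eq_single_iff _ _ _ _).1 h
      omega
  -- the element ebar
  set ebar : (MvPolynomial (Fin 3) ℂ ⧸ Ideal.span {f}) × (MvPolynomial (Fin 3) ℂ ⧸ Ideal.span {f}) × (MvPolynomial (Fin 3) ℂ ⧸ Ideal.span {f}) := (Iπ e₁, Iπ e₂, Iπ e₃)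
    with hebar
  have hebarN : ebar ∈ N := by
    rw [hN, hebar, hd0, hd1, hd2]
    show Iπ e₁ * Iπ g₁ + Iπ e₂ * Iπ g₂ + Iπ e₃ * Iπ g₃ = 0
    rw [← map_mul, ← map_mul, ← map_mul, ← map_add, ← map_add, euler, hπf]
    -- smul on triples is componentwise multiplication
  have hsm : ∀ z : MvPolynomial (Fin 3) ℂ ⧸ Ideal.span {f},
      z • ebar = (z * Iπ e₁, z * Iπ e₂, z * Iπ e₃) := fun z => rfl
  set N' := N.restrictScalars ℂ with hN'def
  set M'' := Submodule.comap N'.subtype (M.restrictScalars ℂ) with hM''def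
  have hsmulmem : ∀ r : Stmt14.R3, Iπ r • ebar ∈ N' := fun r => N.smul_mem (Iπ r) hebarN
  set Ψ : Stmt14.R3 →ₗ[ℂ] ↥N' := {
    toFun := fun r => ⟨Iπ r • ebar, hsmulmem r⟩
    map_add' := fun r s => Subtype.ext (by
      show Iπ (r + s) • ebar = Iπ r • ebar + Iπ s • ebar
      rw [map_add, add_smul])
    map_smul' := fun c r => Subtype.ext (by
      show Iπ (c • r) • ebar = c • (Iπ r • ebar)
      have h1 : Iπ (c • r) = c • Iπ r := by
        exact map_smul (Ideal.Quotient.mkₐ ℂ (Ideal.span {f})) c r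
      rw [h1, smul_assoc]) } with hΨdef
  set θ : Stmt14.R3 →ₗ[ℂ] (↥N' ⧸ M'') := M''.mkQ.comp Ψ with hθdef
  have hθmem : ∀ r : Stmt14.R3, (θ r = 0 ↔ Iπ r • ebar ∈ M) := by
    intro r
    rw [show θ r = M''.mkQ ⟨Iπ r • ebar, hsmulmem r⟩ from rfl, Submodule.mkQ_apply,
      Submodule.Quotient.mk_eq_zero]
    exact ⟨fun h => h, fun h => h⟩
  -- surjectivity of θ
  have hθsurj : Function.Surjective θ := by
    intro q
    obtain ⟨x, rfl⟩ := Submodule.mkQ_surjective M'' q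
    obtain ⟨p₁, hp₁⟩ := Ideal.Quotient.mk_surjective x.val.1
    obtain ⟨p₂, hp₂⟩ := Ideal.Quotient.mk_surjective x.val.2.1
    obtain ⟨p₃, hp₃⟩ := Ideal.Quotient.mk_surjective x.val.2.2
    have hxN : x.val ∈ N := x.2
    rw [← hIπ] at hp₁ hp₂ hp₃
    rw [hN, hd0, hd1, hd2, ← hp₁, ← hp₂, ← hp₃] at hxN
    simp only [← map_mul, ← map_add] at hxN
    obtain ⟨r, hr⟩ := Ideal.mem_span_singleton'.1 (Ideal.Quotient.eq_zero_iff_mem.1 hxN)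
    have h0 : (p₁ - r * e₁) * g₁ + (p₂ - r * e₂) * g₂ + (p₃ - r * e₃) * g₃ = 0 := by
      linear_combination -hr - r * euler
    rw [hg₁def, hg₂def, hg₃def] at h0
    obtain ⟨w₁, w₂, w₃, hw1, hw2, hw3⟩ := Stmt14.syzygy hu₁ hu₂ hu₃ h0
    simp only [← hg₁def, ← hg₂def, ← hg₃def] at hw1 hw2 hw3
    refine ⟨r, ?_⟩
    rw [show θ r = M''.mkQ ⟨Iπ r • ebar, hsmulmem r⟩ from rfl, Submodule.mkQ_apply,
      Submodule.mkQ_apply]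
    refine (Submodule.Quotient.eq M'').2 ?_
    show (Iπ r • ebar - x.val) ∈ M.restrictScalars ℂ
    rw [Submodule.restrictScalars_mem, hM]
    refine ⟨(Iπ (-w₁), Iπ (-w₂), Iπ (-w₃)), ?_⟩
    rw [hd0, hd1, hd2, hsm]
    have c1 : Iπ r * Iπ e₁ - x.val.1 = Iπ g₂ * Iπ (-w₃) - Iπ g₃ * Iπ (-w₂) := by
      rw [← hp₁]; simp only [← map_mul, ← map_sub]
      exact keyπ _ _ 0 (by linear_combination -hw1)
    have c2 : Iπ r * Iπ e₂ - x.val.2.1 = Iπ g₃ * Iπ (-w₁) - Iπ g₁ * Iπ (-w₃) := by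
      rw [← hp₂]; simp only [← map_mul, ← map_sub]
      exact keyπ _ _ 0 (by linear_combination -hw2)
    have c3 : Iπ r * Iπ e₃ - x.val.2.2 = Iπ g₁ * Iπ (-w₂) - Iπ g₂ * Iπ (-w₁) := by
      rw [← hp₃]; simp only [← map_mul, ← map_sub]
      exact keyπ _ _ 0 (by linear_combination -hw3)
    exact Prod.ext c1 (Prod.ext c2 c3)
  -- the monomial ideal T
  set T : Ideal Stmt14.R3 := Ideal.span ((fun d => (monomial d (1:ℂ) : Stmt14.R3)) ''
    {Finsupp.single 0 (i-1), Finsupp.single 1 (j-1), Finsupp.single 2 (k-1)}) with hTdef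
  -- r • ebar ∈ M implies r ∈ T
  have hdirT : ∀ r : Stmt14.R3, Iπ r • ebar ∈ M → r ∈ T := by
    intro r hmem
    rw [hM] at hmem
    obtain ⟨h, hh⟩ := hmem
    obtain ⟨H₁, hH₁⟩ := Ideal.Quotient.mk_surjective h.1
    obtain ⟨H₂, hH₂⟩ := Ideal.Quotient.mk_surjective h.2.1
    obtain ⟨H₃, hH₃⟩ := Ideal.Quotient.mk_surjective h.2.2
    rw [hd0, hd1, hd2, ← hH₁, ← hH₂, ← hH₃, hsm] at hh
    have e1' : Iπ (r * e₁ - (g₂ * H₃ - g₃ * H₂)) = 0 := by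
      rw [map_sub, map_sub, map_mul, map_mul, map_mul, sub_eq_zero]
      exact congrArg Prod.fst hh
    have e2' : Iπ (r * e₂ - (g₃ * H₁ - g₁ * H₃)) = 0 := by
      rw [map_sub, map_sub, map_mul, map_mul, map_mul, sub_eq_zero]
      exact congrArg (fun z => z.2.1) hh
    have e3' : Iπ (r * e₃ - (g₁ * H₂ - g₂ * H₁)) = 0 := by
      rw [map_sub, map_sub, map_mul, map_mul, map_mul, sub_eq_zero]
      exact congrArg (fun z => z.2.2) hh
    obtain ⟨s₁, hs₁⟩ := Ideal.mem_span_singleton'.1 (Ideal.Quotient.eq_zero_iff_mem.1 e1')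
    obtain ⟨s₂, hs₂⟩ := Ideal.mem_span_singleton'.1 (Ideal.Quotient.eq_zero_iff_mem.1 e2')
    obtain ⟨s₃, hs₃⟩ := Ideal.mem_span_singleton'.1 (Ideal.Quotient.eq_zero_iff_mem.1 e3')
    have hcomb : f * (s₁ * g₁ + s₂ * g₂ + s₃ * g₃) = f * r := by
      linear_combination g₁ * hs₁ + g₂ * hs₂ + g₃ * hs₃ + r * euler
    have hreq : s₁ * g₁ + s₂ * g₂ + s₃ * g₃ = r := mul_left_cancel₀ hf0 hcomb
    have hm1T : (monomial (Finsupp.single 0 (i-1)) (1:ℂ) : Stmt14.R3) ∈ T :=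
      Ideal.subset_span ⟨Finsupp.single 0 (i-1), by simp, rfl⟩
    have hm2T : (monomial (Finsupp.single 1 (j-1)) (1:ℂ) : Stmt14.R3) ∈ T :=
      Ideal.subset_span ⟨Finsupp.single 1 (j-1), by simp, rfl⟩
    have hm3T : (monomial (Finsupp.single 2 (k-1)) (1:ℂ) : Stmt14.R3) ∈ T :=
      Ideal.subset_span ⟨Finsupp.single 2 (k-1), by simp, rfl⟩
    have hg₁T : g₁ ∈ T := by
      rw [hg₁def, X_pow_eq_monomial]; exact Ideal.mul_mem_left _ _ hm1T
    have hg₂T : g₂ ∈ T := by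
      rw [hg₂def, X_pow_eq_monomial]; exact Ideal.mul_mem_left _ _ hm2T
    have hg₃T : g₃ ∈ T := by
      rw [hg₃def, X_pow_eq_monomial]; exact Ideal.mul_mem_left _ _ hm3T
    rw [← hreq]
    exact add_mem (add_mem (Ideal.mul_mem_left _ _ hg₁T) (Ideal.mul_mem_left _ _ hg₂T))
      (Ideal.mul_mem_left _ _ hg₃T)
  -- the ideal K of r with r • ebar ∈ M, and T ≤ K
  set K : Ideal Stmt14.R3 := {
    carrier := {r | Iπ r • ebar ∈ M}
    add_mem' := fun {x y} hx hy => by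
      show Iπ (x + y) • ebar ∈ M
      rw [map_add, add_smul]
      exact M.add_mem hx hy
    zero_mem' := by
      show Iπ 0 • ebar ∈ M
      rw [map_zero]
      exact (congrArg (· ∈ M) (zero_smul (MvPolynomial (Fin 3) ℂ ⧸ Ideal.span {f}) ebar)).mpr M.zero_mem
    smul_mem' := fun cr x hx => by
      show Iπ (cr * x) • ebar ∈ M
      rw [map_mul]
      exact (congrArg (· ∈ M) (mul_smul (Iπ cr) (Iπ x) ebar)).mpr (M.smul_mem _ hx) } with hKdef
  have hg₁K : g₁ ∈ K := by
    show Iπ g₁ • ebar ∈ M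
    rw [hM, hsm]
    refine ⟨(Iπ 0, Iπ e₃, Iπ (-e₂)), ?_⟩
    rw [hd0, hd1, hd2]
    have c1 : Iπ g₁ * Iπ e₁ = Iπ g₂ * Iπ (-e₂) - Iπ g₃ * Iπ e₃ := by
      simp only [← map_mul, ← map_sub]
      exact keyπ _ _ 1 (by linear_combination euler)
    have c2 : Iπ g₁ * Iπ e₂ = Iπ g₃ * Iπ 0 - Iπ g₁ * Iπ (-e₂) := by
      simp only [← map_mul, ← map_sub]
      exact keyπ _ _ 0 (by ring)
    have c3 : Iπ g₁ * Iπ e₃ = Iπ g₁ * Iπ e₃ - Iπ g₂ * Iπ 0 := by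
      simp only [← map_mul, ← map_sub]
      exact keyπ _ _ 0 (by ring)
    exact Prod.ext c1 (Prod.ext c2 c3)
  have hg₂K : g₂ ∈ K := by
    show Iπ g₂ • ebar ∈ M
    rw [hM, hsm]
    refine ⟨(Iπ (-e₃), Iπ 0, Iπ e₁), ?_⟩
    rw [hd0, hd1, hd2]
    have c1 : Iπ g₂ * Iπ e₁ = Iπ g₂ * Iπ e₁ - Iπ g₃ * Iπ 0 := by
      simp only [← map_mul, ← map_sub]
      exact keyπ _ _ 0 (by ring)
    have c2 : Iπ g₂ * Iπ e₂ = Iπ g₃ * Iπ (-e₃) - Iπ g₁ * Iπ e₁ := by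
      simp only [← map_mul, ← map_sub]
      exact keyπ _ _ 1 (by linear_combination euler)
    have c3 : Iπ g₂ * Iπ e₃ = Iπ g₁ * Iπ 0 - Iπ g₂ * Iπ (-e₃) := by
      simp only [← map_mul, ← map_sub]
      exact keyπ _ _ 0 (by ring)
    exact Prod.ext c1 (Prod.ext c2 c3)
  have hg₃K : g₃ ∈ K := by
    show Iπ g₃ • ebar ∈ M
    rw [hM, hsm]
    refine ⟨(Iπ e₂, Iπ (-e₁), Iπ 0), ?_⟩
    rw [hd0, hd1, hd2]
    have c1 : Iπ g₃ * Iπ e₁ = Iπ g₂ * Iπ 0 - Iπ g₃ * Iπ (-e₁) := by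
      simp only [← map_mul, ← map_sub]
      exact keyπ _ _ 0 (by ring)
    have c2 : Iπ g₃ * Iπ e₂ = Iπ g₃ * Iπ e₂ - Iπ g₁ * Iπ 0 := by
      simp only [← map_mul, ← map_sub]
      exact keyπ _ _ 0 (by ring)
    have c3 : Iπ g₃ * Iπ e₃ = Iπ g₁ * Iπ (-e₁) - Iπ g₂ * Iπ e₂ := by
      simp only [← map_mul, ← map_sub]
      exact keyπ _ _ 1 (by linear_combination euler)
    exact Prod.ext c1 (Prod.ext c2 c3)
  have hTK : T ≤ K := by
    rw [hTdef]
    refine Ideal.span_le.2 ?_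
    rintro x ⟨d, hd, rfl⟩
    simp only [Set.mem_insert_iff, Set.mem_singleton_iff] at hd
    rcases hd with rfl | rfl | rfl
    · have heq : (monomial (Finsupp.single 0 (i-1)) (1:ℂ) : Stmt14.R3) = C (a₁ * i)⁻¹ * g₁ := by
        rw [hg₁def, ← mul_assoc, ← C_mul, inv_mul_cancel₀ hu₁, C_1, one_mul, X_pow_eq_monomial]
      rw [SetLike.mem_coe]
      show (monomial (Finsupp.single 0 (i-1)) (1:ℂ) : Stmt14.R3) ∈ _
      rw [heq]; exact Ideal.mul_mem_left _ _ hg₁K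
    · have heq : (monomial (Finsupp.single 1 (j-1)) (1:ℂ) : Stmt14.R3) = C (a₂ * j)⁻¹ * g₂ := by
        rw [hg₂def, ← mul_assoc, ← C_mul, inv_mul_cancel₀ hu₂, C_1, one_mul, X_pow_eq_monomial]
      rw [SetLike.mem_coe]
      show (monomial (Finsupp.single 1 (j-1)) (1:ℂ) : Stmt14.R3) ∈ _
      rw [heq]; exact Ideal.mul_mem_left _ _ hg₂K
    · have heq : (monomial (Finsupp.single 2 (k-1)) (1:ℂ) : Stmt14.R3) = C (a₃ * k)⁻¹ * g₃ := by
        rw [hg₃def, ← mul_assoc, ← C_mul, inv_mul_cancel₀ hu₃, C_1, one_mul, X_pow_eq_monomial]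
      rw [SetLike.mem_coe]
      show (monomial (Finsupp.single 2 (k-1)) (1:ℂ) : Stmt14.R3) ∈ _
      rw [heq]; exact Ideal.mul_mem_left _ _ hg₃K
  -- kernel identification
  have hkerEq : LinearMap.ker θ = LinearMap.ker (Stmt14.Phi (i-1) (j-1) (k-1)) := by
    ext r
    rw [LinearMap.mem_ker, LinearMap.mem_ker, hθmem r,
      show (Stmt14.Phi (i-1) (j-1) (k-1) r = 0) ↔ _ from Stmt14.Phi_eq_zero_iff]
    constructor
    · intro h
      have hrT := hdirT r h
      rw [hTdef, Stmt14.mem_monIdeal] at hrT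
      intro d hd
      obtain ⟨e, he, hle⟩ := hrT d hd
      simp only [Set.mem_insert_iff, Set.mem_singleton_iff] at he
      rcases he with rfl | rfl | rfl
      · exact Or.inl (Finsupp.single_le_iff.1 hle)
      · exact Or.inr (Or.inl (Finsupp.single_le_iff.1 hle))
      · exact Or.inr (Or.inr (Finsupp.single_le_iff.1 hle))
    · intro h
      refine hTK ?_
      rw [hTdef, Stmt14.mem_monIdeal]
      intro d hd
      rcases h d hd with h' | h' | h'
      · exact ⟨_, by simp, Finsupp.single_le_iff.2 h'⟩
      · exact ⟨Finsupp.single 1 (j-1), by simp, Finsupp.single_le_iff.2 h'⟩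
      · exact ⟨Finsupp.single 2 (k-1), by simp, Finsupp.single_le_iff.2 h'⟩
  -- conclude via finrank computations
  have equiv1 := θ.quotKerEquivOfSurjective hθsurj
  have equiv2 := (Stmt14.Phi (i-1) (j-1) (k-1)).quotKerEquivOfSurjective
    (Stmt14.Phi_surj (i-1) (j-1) (k-1))
  have equiv3 := Submodule.quotEquivOfEq _ _ hkerEq
  rw [← LinearEquiv.finrank_eq equiv1, LinearEquiv.finrank_eq equiv3,
    LinearEquiv.finrank_eq equiv2, Module.finrank_pi]
  simp [mul_assoc]
end

section
/- Let 2 ≤ i ≤ j ≤ k, a₁, a₂, a₃ ∈ ℂ∖{0}, f = a₁z₁^i + a₂z₂^j + a₃z₃^k ∈ ℂ[z₁,z₂,z₃], and A := ℂ[z₁,z₂,z₃]/⟨f⟩. Then the map A² → A³ sending (g₁,g₂) to ∇f ∧ (g₁,g₂,0), where ∇f ∧ h denotes the cross product, is injective; consequently the A-submodule {∇f ∧ h : h ∈ A³} of A³ is an infinite-dimensional ℂ-vector space. -/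
open MvPolynomial

private lemma stmt15_fse_C (a : ℂ) :
    (finSuccEquiv ℂ 2) (C a) = Polynomial.C (C a) := by
  simp [finSuccEquiv_apply]

private lemma stmt15_poly_reg {B : Type*} [CommRing B] [IsDomain B] (F G : Polynomial B)
    (hc : F.coeff 0 ≠ 0) (h : F ∣ Polynomial.X * G) : F ∣ G := by
  obtain ⟨q, hq⟩ := h
  have h0 : q.coeff 0 = 0 := by
    have := congrArg (fun p => Polynomial.coeff p 0) hq
    simp [Polynomial.mul_coeff_zero] at this
    tauto
  obtain ⟨q', rfl⟩ := Polynomial.X_dvd_iff.mpr h0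
  refine ⟨q', mul_left_cancel₀ (Polynomial.X_ne_zero) ?_⟩
  rw [hq]; ring

private lemma stmt15_c_ne (a₁ a₂ : ℂ) (ha₁ : a₁ ≠ 0) (i j : ℕ) (hj : 1 ≤ j) :
    (C a₁ * X 1 ^ i + C a₂ * X 0 ^ j : MvPolynomial (Fin 2) ℂ) ≠ 0 := by
  intro h
  have := congrArg (eval (fun v => if v = 1 then 1 else 0)) h
  simp [zero_pow (by omega : j ≠ 0)] at this
  exact ha₁ this

/-- `X 2` is a regular element modulo `f`. -/
private lemma stmt15_reg (a₁ a₂ a₃ : ℂ) (ha₁ : a₁ ≠ 0) (i j k : ℕ)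
    (hi : 1 ≤ i) (hj : 1 ≤ j) (hk : 1 ≤ k) (g : MvPolynomial (Fin 3) ℂ)
    (h : (C a₁ * X 0 ^ i + C a₂ * X 1 ^ j + C a₃ * X 2 ^ k) ∣ X 2 * g) :
    (C a₁ * X 0 ^ i + C a₂ * X 1 ^ j + C a₃ * X 2 ^ k) ∣ g := by
  set e := (renameEquiv ℂ (Equiv.swap (0:Fin 3) 2)).trans (finSuccEquiv ℂ 2) with he
  rw [← map_dvd_iff e] at h ⊢
  rw [map_mul] at h
  have h2 : (X (2:Fin 3) : MvPolynomial (Fin 3) ℂ) = X (Fin.succ 1) := rfl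
  have h1 : (X (1:Fin 3) : MvPolynomial (Fin 3) ℂ) = X (Fin.succ 0) := rfl
  have hs0 : Equiv.swap (0:Fin 3) 2 0 = 2 := Equiv.swap_apply_left 0 2
  have hs2 : Equiv.swap (0:Fin 3) 2 2 = 0 := Equiv.swap_apply_right 0 2
  have hs1 : Equiv.swap (0:Fin 3) 2 1 = 1 := Equiv.swap_apply_of_ne_of_ne (by decide) (by decide)
  have ef : e (C a₁ * X 0 ^ i + C a₂ * X 1 ^ j + C a₃ * X 2 ^ k) =
      Polynomial.C (C a₁) * Polynomial.C (X 1) ^ i + Polynomial.C (C a₂) * Polynomial.C (X 0) ^ j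
        + Polynomial.C (C a₃) * Polynomial.X ^ k := by
    simp only [he, AlgEquiv.trans_apply, renameEquiv_apply, map_add, map_mul, map_pow, rename_C,
      rename_X, hs0, hs1, hs2]
    rw [h2, h1, stmt15_fse_C, stmt15_fse_C, stmt15_fse_C, finSuccEquiv_X_zero,
      finSuccEquiv_X_succ, finSuccEquiv_X_succ]
  have eX : e (X 2) = Polynomial.X := by
    simp only [he, AlgEquiv.trans_apply, renameEquiv_apply, rename_X, hs2, finSuccEquiv_X_zero]
  rw [ef, eX] at h
  rw [ef]
  refine stmt15_poly_reg _ _ ?_ h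
  have hk0 : k ≠ 0 := by omega
  have hco : ((Polynomial.C (C a₁) * Polynomial.C (X 1) ^ i
        + Polynomial.C (C a₂) * Polynomial.C (X 0) ^ j
        + Polynomial.C (C a₃) * Polynomial.X ^ k : Polynomial (MvPolynomial (Fin 2) ℂ))).coeff 0
      = (C a₁ * X 1 ^ i + C a₂ * X 0 ^ j : MvPolynomial (Fin 2) ℂ) := by
    simp only [Polynomial.coeff_add, Polynomial.coeff_C_mul, Polynomial.coeff_X_pow, hk0,
      ← Polynomial.C_pow, Polynomial.coeff_C, if_neg (Ne.symm hk0), mul_zero, add_zero]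
    simp
  rw [hco]
  exact stmt15_c_ne a₁ a₂ ha₁ i j hj

private lemma stmt15_reg_pow (a₁ a₂ a₃ : ℂ) (ha₁ : a₁ ≠ 0) (i j k : ℕ)
    (hi : 1 ≤ i) (hj : 1 ≤ j) (hk : 1 ≤ k) (m : ℕ) (g : MvPolynomial (Fin 3) ℂ)
    (h : (C a₁ * X 0 ^ i + C a₂ * X 1 ^ j + C a₃ * X 2 ^ k) ∣ X 2 ^ m * g) :
    (C a₁ * X 0 ^ i + C a₂ * X 1 ^ j + C a₃ * X 2 ^ k) ∣ g := by
  induction m generalizing g with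
  | zero => simpa using h
  | succ m ih =>
    apply ih
    apply stmt15_reg a₁ a₂ a₃ ha₁ i j k hi hj hk
    have : X 2 * (X 2 ^ m * g) = X 2 ^ (m + 1) * g := by ring
    rw [this]
    exact h

private lemma stmt15_ker (i j k : ℕ) (hi : 1 ≤ i) (hj : 1 ≤ j) (hk : 1 ≤ k)
    (a₁ a₂ a₃ : ℂ) (ha₃ : a₃ ≠ 0) (P : Polynomial ℂ)
    (h : (C a₁ * X 0 ^ i + C a₂ * X 1 ^ j + C a₃ * X 2 ^ k : MvPolynomial (Fin 3) ℂ) ∣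
      Polynomial.aeval (X 0) P) : P = 0 := by
  apply Polynomial.eq_zero_of_infinite_isRoot
  have : {x : ℂ | P.IsRoot x} = Set.univ := by
    ext t
    simp only [Set.mem_setOf_eq, Set.mem_univ, iff_true]
    obtain ⟨z, hz⟩ := IsAlgClosed.exists_pow_nat_eq (-(a₁ * t ^ i) / a₃) (by omega : 0 < k)
    obtain ⟨q, hq⟩ := h
    set x : Fin 3 → ℂ := ![t, 0, z] with hx
    have hfx : (aeval x) (C a₁ * X 0 ^ i + C a₂ * X 1 ^ j + C a₃ * X 2 ^ k
        : MvPolynomial (Fin 3) ℂ) = 0 := by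
      simp [hx, hz, zero_pow (by omega : j ≠ 0)]
      field_simp
      ring
    have := congrArg (aeval x) hq
    rw [map_mul, hfx, zero_mul] at this
    have h2 : (Polynomial.aeval ((aeval x) (X 0 : MvPolynomial (Fin 3) ℂ))) P
        = (aeval x) ((Polynomial.aeval (X 0 : MvPolynomial (Fin 3) ℂ)) P) :=
      Polynomial.aeval_algHom_apply (aeval x) _ P
    rw [this] at h2
    have h3 : (aeval x) (X 0 : MvPolynomial (Fin 3) ℂ) = t := by simp [hx]
    rw [h3] at h2
    rwa [show Polynomial.aeval t P = Polynomial.eval t P from by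
      rw [Polynomial.coe_aeval_eq_eval]] at h2
  rw [this]
  exact Set.infinite_univ

set_option maxHeartbeats 2000000 in
/-- For `2 ≤ i ≤ j ≤ k`, nonzero `a₁, a₂, a₃ ∈ ℂ`,
`f = a₁z₁^i + a₂z₂^j + a₃z₃^k` and `A = ℂ[z₁,z₂,z₃]/⟨f⟩`, the map
`A² → A³, (g₁,g₂) ↦ ∇f ∧ (g₁,g₂,0)` is injective; consequently the
`A`-submodule `{∇f ∧ h : h ∈ A³}` of `A³` is an infinite-dimensional
ℂ-vector space. -/
theorem stmt_15 (i j k : ℕ) (hi : 2 ≤ i) (hij : i ≤ j) (hjk : j ≤ k)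
    (a₁ a₂ a₃ : ℂ) (ha₁ : a₁ ≠ 0) (ha₂ : a₂ ≠ 0) (ha₃ : a₃ ≠ 0)
    (f : MvPolynomial (Fin 3) ℂ)
    (hf : f = C a₁ * X 0 ^ i + C a₂ * X 1 ^ j + C a₃ * X 2 ^ k)
    (π : MvPolynomial (Fin 3) ℂ →+* (MvPolynomial (Fin 3) ℂ ⧸ Ideal.span {f}))
    (hπ : π = Ideal.Quotient.mk (Ideal.span {f}))
    (cross : ((MvPolynomial (Fin 3) ℂ ⧸ Ideal.span {f}) ×
        (MvPolynomial (Fin 3) ℂ ⧸ Ideal.span {f}) × (MvPolynomial (Fin 3) ℂ ⧸ Ideal.span {f})) →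
      (MvPolynomial (Fin 3) ℂ ⧸ Ideal.span {f}) × (MvPolynomial (Fin 3) ℂ ⧸ Ideal.span {f}) ×
        (MvPolynomial (Fin 3) ℂ ⧸ Ideal.span {f}))
    (hcross : ∀ h, cross h =
      (π (pderiv 1 f) * h.2.2 - π (pderiv 2 f) * h.2.1,
       π (pderiv 2 f) * h.1 - π (pderiv 0 f) * h.2.2,
       π (pderiv 0 f) * h.2.1 - π (pderiv 1 f) * h.1)) :
    Function.Injective (fun g : (MvPolynomial (Fin 3) ℂ ⧸ Ideal.span {f}) ×
        (MvPolynomial (Fin 3) ℂ ⧸ Ideal.span {f}) => cross (g.1, g.2, 0)) ∧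
    ¬ FiniteDimensional ℂ (Submodule.span ℂ {x | ∃ h, x = cross h}) := by
  have hi1 : 1 ≤ i := by omega
  have hj1 : 1 ≤ j := by omega
  have hk1 : 1 ≤ k := by omega
  -- the partial derivative in direction 2
  have hpd2 : pderiv 2 f = C (a₃ * (k:ℂ)) * X 2 ^ (k-1) := by
    have h0 : (0:Fin 3) ≠ 2 := by decide
    have h1 : (1:Fin 3) ≠ 2 := by decide
    rw [hf]
    simp [pderiv_C_mul, pderiv_pow, pderiv_X_self, pderiv_X_of_ne h0, pderiv_X_of_ne h1]
    ring
  -- key regularity: multiplication by π (pderiv 2 f) is injective on the quotient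
  have hker : ∀ x : MvPolynomial (Fin 3) ℂ ⧸ Ideal.span {f},
      π (pderiv 2 f) * x = 0 → x = 0 := by
    intro x hx
    obtain ⟨g, rfl⟩ : ∃ g, π g = x := by
      rw [hπ]; exact Ideal.Quotient.mk_surjective x
    rw [hπ] at hx ⊢
    rw [← map_mul] at hx
    rw [Ideal.Quotient.eq_zero_iff_mem, Ideal.mem_span_singleton] at hx ⊢
    have hunit : IsUnit (C (a₃ * (k:ℂ)) : MvPolynomial (Fin 3) ℂ) := by
      apply IsUnit.map (C : ℂ →+* MvPolynomial (Fin 3) ℂ)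
      exact isUnit_iff_ne_zero.mpr (mul_ne_zero ha₃ (by exact_mod_cast (by omega : (k:ℕ) ≠ 0)))
    have : f ∣ C (a₃ * (k:ℂ)) * (X 2 ^ (k-1) * g) := by
      rw [← mul_assoc, ← hpd2]; exact hx
    rw [hunit.dvd_mul_left] at this
    rw [hf] at this ⊢
    exact stmt15_reg_pow a₁ a₂ a₃ ha₁ i j k hi1 hj1 hk1 (k-1) g this
  have hcancel : ∀ x y : MvPolynomial (Fin 3) ℂ ⧸ Ideal.span {f},
      π (pderiv 2 f) * x = π (pderiv 2 f) * y → x = y := by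
    intro x y hxy
    have := hker (x - y) (by rw [mul_sub, hxy, sub_self])
    exact sub_eq_zero.mp this
  constructor
  · intro p q heq
    simp only [hcross] at heq
    have e1 := congrArg Prod.fst heq
    have e2 := congrArg (fun z => z.2.1) heq
    simp only at e1 e2
    have hq2 : p.2 = q.2 := by
      apply hcancel
      have h' : -(π (pderiv 2 f) * p.2) = -(π (pderiv 2 f) * q.2) := by
        simpa using e1
      exact neg_inj.mp h'
    have hq1 : p.1 = q.1 := by
      apply hcancel
      simpa using e2
    exact Prod.ext hq1 hq2
  · intro hfd
    -- the algebra map ℂ[T] → A, T ↦ class of X 0, is injective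
    set κ := ((Ideal.Quotient.mkₐ ℂ (Ideal.span {f})).comp
      (Polynomial.aeval (X 0 : MvPolynomial (Fin 3) ℂ))) with hκ
    have hκinj : Function.Injective κ := by
      rw [injective_iff_map_eq_zero]
      intro P hP
      simp only [hκ, AlgHom.comp_apply, Ideal.Quotient.mkₐ_eq_mk] at hP
      rw [Ideal.Quotient.eq_zero_iff_mem, Ideal.mem_span_singleton, hf] at hP
      exact stmt15_ker i j k hi1 hj1 hk1 a₁ a₂ a₃ ha₃ P hP
    -- the ℕ-indexed linearly independent family
    have hXpow : LinearIndependent ℂ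
        (fun n : ℕ => (Polynomial.X : Polynomial ℂ) ^ n) := by
      have := (Polynomial.basisMonomials ℂ).linearIndependent
      rwa [Polynomial.coe_basisMonomials,
        show (fun s : ℕ => Polynomial.monomial s (1:ℂ)) = fun n : ℕ =>
          (Polynomial.X : Polynomial ℂ) ^ n from
        funext fun n => (Polynomial.X_pow_eq_monomial n).symm] at this
    have hw : LinearIndependent ℂ (fun n : ℕ => κ (Polynomial.X ^ n)) :=
      hXpow.map' κ.toLinearMap (LinearMap.ker_eq_bot.mpr hκinj)
    -- multiplication by d := π (pderiv 2 f) as an injective linear map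
    set d : MvPolynomial (Fin 3) ℂ ⧸ Ideal.span {f} := π (pderiv 2 f) with hd
    set mulD := LinearMap.mulLeft ℂ d with hmulD
    have hmulDinj : Function.Injective mulD := by
      rw [injective_iff_map_eq_zero]
      intro x hx
      exact hker x hx
    -- the linear map g ↦ cross (g, 0, 0)
    set L :=
      LinearMap.prod (0 : (MvPolynomial (Fin 3) ℂ ⧸ Ideal.span {f}) →ₗ[ℂ]
          (MvPolynomial (Fin 3) ℂ ⧸ Ideal.span {f}))
        (LinearMap.prod (LinearMap.mulLeft ℂ d)
        (-(LinearMap.mulLeft ℂ (π (pderiv 1 f))))) with hL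
    have hLcross : ∀ g, L g = cross (g, 0, 0) := by
      intro g
      rw [hcross]
      simp [hL, hd, Prod.ext_iff]
    have hmem : ∀ g, L g ∈ Submodule.span ℂ {x | ∃ h, x = cross h} := by
      intro g
      apply Submodule.subset_span
      exact ⟨(g, 0, 0), hLcross g⟩
    set u : ℕ → (Submodule.span ℂ {x | ∃ h, x = cross h}) :=
      fun n => ⟨L (κ (Polynomial.X ^ n)), hmem _⟩ with hu
    have huind : LinearIndependent ℂ u := by
      apply LinearIndependent.of_comp
        ((Submodule.span ℂ {x | ∃ h, x = cross h}).subtype)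
      have hcomp : ((Submodule.span ℂ {x | ∃ h, x = cross h}).subtype ∘ u)
          = fun n => L (κ (Polynomial.X ^ n)) := rfl
      rw [hcomp]
      apply LinearIndependent.of_comp
        ((LinearMap.fst ℂ _ _).comp (LinearMap.snd ℂ (MvPolynomial (Fin 3) ℂ ⧸ Ideal.span {f}) _))
      have hcomp2 : (⇑((LinearMap.fst ℂ _ _).comp
          (LinearMap.snd ℂ (MvPolynomial (Fin 3) ℂ ⧸ Ideal.span {f}) _))
          ∘ fun n => L (κ (Polynomial.X ^ n))) = fun n => mulD (κ (Polynomial.X ^ n)) := by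
        funext n
        simp [hL, hmulD]
      rw [hcomp2]
      exact hw.map' mulD (LinearMap.ker_eq_bot.mpr hmulDinj)
    exact Module.Finite.not_linearIndependent_of_infinite u huind
end

section
/- Let k ≥ 1 and let ζ ∈ ℂ be a primitive k-th root of unity. Consider the ℂ-algebra automorphism σ of ℂ[x,y] determined by σ(x) = ζx and σ(y) = ζ⁻¹y, and let B := {p ∈ ℂ[x,y] : σ(p) = p} be the invariant subalgebra. Then: (1) B is generated as a ℂ-algebra by x^k, y^k, and xy; and (2) the ℂ-algebra homomorphism φ : ℂ[z₁,z₂,z₃] → ℂ[x,y] determined by φ(z₁) = x^k, φ(z₂) = y^k, φ(z₃) = xy has kernel equal to the ideal ⟨z₁z₂ − z₃^k⟩, so that B is isomorphic as a ℂ-algebra to ℂ[z₁,z₂,z₃]/⟨z₁z₂ − z₃^k⟩. -/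
open MvPolynomial

lemma sigma_monomial (ζ : ℂ) (d : Fin 2 →₀ ℕ) (c : ℂ) :
    aeval (fun i : Fin 2 => if i = 0 then C ζ * X 0 else C ζ⁻¹ * X 1) (monomial d c)
      = C (ζ ^ d 0 * ζ⁻¹ ^ d 1) * monomial d c := by
  rw [aeval_monomial, monomial_eq, Finsupp.prod_pow, Finsupp.prod_pow,
    Fin.prod_univ_two, Fin.prod_univ_two]
  norm_num
  rw [← inv_pow, C_pow]
  ring

lemma coeff_sigma (ζ : ℂ) (p : MvPolynomial (Fin 2) ℂ) (e : Fin 2 →₀ ℕ) :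
    coeff e (aeval (fun i : Fin 2 => if i = 0 then C ζ * X 0 else C ζ⁻¹ * X 1) p)
      = (ζ ^ e 0 * ζ⁻¹ ^ e 1) * coeff e p := by
  conv_lhs => rw [← support_sum_monomial_coeff p]
  rw [map_sum]
  simp_rw [sigma_monomial, C_mul_monomial, coeff_sum, coeff_monomial]
  rw [Finset.sum_ite_eq' p.support e (fun d => (ζ ^ d 0 * ζ⁻¹ ^ d 1) * coeff d p)]
  by_cases h : e ∈ p.support
  · rw [if_pos h]
  · rw [if_neg h, MvPolynomial.notMem_support_iff.mp h, mul_zero]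

lemma zeta_pow_eq_one_iff (k : ℕ) (hk : 1 ≤ k) (ζ : ℂ) (hζ : IsPrimitiveRoot ζ k) (a b : ℕ) :
    ζ ^ a * ζ⁻¹ ^ b = 1 ↔ (k : ℤ) ∣ (a : ℤ) - b := by
  have hz : ζ ≠ 0 := by
    intro h; subst h
    exact one_ne_zero ((hζ.pow_eq_one).symm.trans (zero_pow (by omega)))
  rw [← zpow_natCast ζ a, ← zpow_natCast ζ⁻¹ b, inv_zpow, ← zpow_neg, ← zpow_add₀ hz,
    hζ.zpow_eq_one_iff_dvd, ← sub_eq_add_neg]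

lemma mem_B_iff (k : ℕ) (hk : 1 ≤ k) (ζ : ℂ) (hζ : IsPrimitiveRoot ζ k)
    (p : MvPolynomial (Fin 2) ℂ) :
    aeval (fun i : Fin 2 => if i = 0 then C ζ * X 0 else C ζ⁻¹ * X 1) p = p ↔
      ∀ d ∈ p.support, (k : ℤ) ∣ (d 0 : ℤ) - d 1 := by
  constructor
  · intro h d hd
    have h2 := congrArg (coeff d) h
    rw [coeff_sigma] at h2
    have hc : coeff d p ≠ 0 := MvPolynomial.mem_support_iff.mp hd
    have : ζ ^ d 0 * ζ⁻¹ ^ d 1 = 1 := mul_right_cancel₀ hc (by rw [h2, one_mul])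
    exact (zeta_pow_eq_one_iff k hk ζ hζ _ _).mp this
  · intro h
    ext e
    rw [coeff_sigma]
    by_cases he : e ∈ p.support
    · rw [(zeta_pow_eq_one_iff k hk ζ hζ _ _).mpr (h e he), one_mul]
    · rw [MvPolynomial.notMem_support_iff.mp he, mul_zero]

lemma pow_mul_pow_mem (k : ℕ) (hk : 1 ≤ k) (a b : ℕ) (h : (k : ℤ) ∣ (a : ℤ) - b) :
    (X 0 : MvPolynomial (Fin 2) ℂ) ^ a * X 1 ^ b ∈
      Algebra.adjoin ℂ {X 0 ^ k, X 1 ^ k, X 0 * X 1} := by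
  have h0 : (X 0 : MvPolynomial (Fin 2) ℂ) ^ k ∈ Algebra.adjoin ℂ {X 0 ^ k, X 1 ^ k, X 0 * X 1} :=
    Algebra.subset_adjoin (by simp)
  have h1 : (X 1 : MvPolynomial (Fin 2) ℂ) ^ k ∈ Algebra.adjoin ℂ {X 0 ^ k, X 1 ^ k, X 0 * X 1} :=
    Algebra.subset_adjoin (by simp)
  have h2 : (X 0 : MvPolynomial (Fin 2) ℂ) * X 1 ∈ Algebra.adjoin ℂ {X 0 ^ k, X 1 ^ k, X 0 * X 1} :=
    Algebra.subset_adjoin (by simp)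
  rcases le_or_gt b a with hab | hab
  · obtain ⟨m, hm⟩ : ∃ m, a = b + k * m := by
      obtain ⟨c, hc⟩ := h
      refine ⟨c.toNat, ?_⟩
      have hc0 : 0 ≤ c := by nlinarith
      zify
      rw [Int.toNat_of_nonneg hc0]
      linarith
    subst hm
    have : (X 0 : MvPolynomial (Fin 2) ℂ) ^ (b + k * m) * X 1 ^ b
        = (X 0 * X 1) ^ b * (X 0 ^ k) ^ m := by ring
    rw [this]
    exact mul_mem (pow_mem h2 b) (pow_mem h0 m)
  · obtain ⟨m, hm⟩ : ∃ m, b = a + k * m := by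
      obtain ⟨c, hc⟩ := h
      refine ⟨(-c).toNat, ?_⟩
      have hc0 : 0 ≤ -c := by nlinarith
      zify
      rw [Int.toNat_of_nonneg hc0]
      linarith
    subst hm
    have : (X 0 : MvPolynomial (Fin 2) ℂ) ^ a * X 1 ^ (a + k * m)
        = (X 0 * X 1) ^ a * (X 1 ^ k) ^ m := by ring
    rw [this]
    exact mul_mem (pow_mem h2 a) (pow_mem h1 m)

lemma part1 (k : ℕ) (hk : 1 ≤ k) (ζ : ℂ) (hζ : IsPrimitiveRoot ζ k)
    (σ : MvPolynomial (Fin 2) ℂ →ₐ[ℂ] MvPolynomial (Fin 2) ℂ)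
    (hσ : σ = aeval (fun i : Fin 2 => if i = 0 then C ζ * X 0 else C ζ⁻¹ * X 1))
    (B : Subalgebra ℂ (MvPolynomial (Fin 2) ℂ))
    (hB : ∀ p, p ∈ B ↔ σ p = p) :
    B = Algebra.adjoin ℂ {X 0 ^ k, X 1 ^ k, X 0 * X 1} := by
  have hz : ζ ≠ 0 := by
    intro h; subst h
    exact one_ne_zero ((hζ.pow_eq_one).symm.trans (zero_pow (by omega)))
  apply le_antisymm
  · intro p hp
    rw [hB, hσ, mem_B_iff k hk ζ hζ] at hp
    rw [← support_sum_monomial_coeff p]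
    apply Subalgebra.sum_mem
    intro d hd
    rw [monomial_eq, Finsupp.prod_pow, Fin.prod_univ_two]
    exact mul_mem (Subalgebra.algebraMap_mem _ _) (pow_mul_pow_mem k hk _ _ (hp d hd))
  · apply Algebra.adjoin_le
    intro x hx
    show x ∈ B
    rw [hB, hσ]
    rcases hx with rfl | rfl | rfl
    · simp [mul_pow, ← C_pow, hζ.pow_eq_one]
    · simp [mul_pow, ← C_pow, inv_pow, hζ.pow_eq_one]
    · simp only [map_mul, aeval_X]
      norm_num
      have : (C ζ * X 0 * (C ζ⁻¹ * X 1) : MvPolynomial (Fin 2) ℂ) = C (ζ * ζ⁻¹) * (X 0 * X 1) := by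
        rw [C_mul]; ring
      rw [mul_inv_cancel₀ hz, C_1, one_mul] at this
      exact this

noncomputable def psi (k : ℕ) (e : Fin 3 →₀ ℕ) : Fin 2 →₀ ℕ :=
  Finsupp.equivFunOnFinite.symm ![k * e 0 + e 2, k * e 1 + e 2]

lemma psi_apply0 (k : ℕ) (e : Fin 3 →₀ ℕ) : psi k e 0 = k * e 0 + e 2 := rfl
lemma psi_apply1 (k : ℕ) (e : Fin 3 →₀ ℕ) : psi k e 1 = k * e 1 + e 2 := rfl

lemma phi_monomial (k : ℕ) (e : Fin 3 →₀ ℕ) (c : ℂ) :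
    aeval ![X 0 ^ k, X 1 ^ k, X 0 * X 1] (monomial e c) = monomial (psi k e) c := by
  rw [aeval_monomial, monomial_eq, Finsupp.prod_pow, Finsupp.prod_pow,
    Fin.prod_univ_three, Fin.prod_univ_two, psi_apply0, psi_apply1, algebraMap_eq]
  simp only [Matrix.cons_val_zero, Matrix.cons_val_one, Matrix.head_cons,
    Matrix.cons_val_two, Matrix.tail_cons]
  ring

lemma psi_inj (k : ℕ) (hk : 1 ≤ k) (e e' : Fin 3 →₀ ℕ)
    (he : e 0 = 0 ∨ e 1 = 0) (he' : e' 0 = 0 ∨ e' 1 = 0)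
    (h : psi k e = psi k e') : e = e' := by
  have h0 : k * e 0 + e 2 = k * e' 0 + e' 2 := by
    rw [← psi_apply0 k e, ← psi_apply0 k e', h]
  have h1 : k * e 1 + e 2 = k * e' 1 + e' 2 := by
    rw [← psi_apply1 k e, ← psi_apply1 k e', h]
  have hsum : k * (e 0 + e' 1) = k * (e' 0 + e 1) := by
    rw [mul_add, mul_add]; omega
  have h3 : e 0 + e' 1 = e' 0 + e 1 := Nat.eq_of_mul_eq_mul_left (by omega) hsum
  have h03 : e 0 = e' 0 ∧ e 1 = e' 1 := by
    rcases he with h4 | h4 <;> rcases he' with h5 | h5 <;> omega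
  have h2 : e 2 = e' 2 := by
    have := h03.1
    nlinarith [h0]
  ext i
  fin_cases i
  · exact h03.1
  · exact h03.2
  · exact h2

lemma monomial_normal_form (k : ℕ) (n : ℕ) :
    ∀ (e : Fin 3 →₀ ℕ) (c : ℂ), min (e 0) (e 1) ≤ n →
    ∃ r : MvPolynomial (Fin 3) ℂ, (∀ d ∈ r.support, d 0 = 0 ∨ d 1 = 0) ∧
      monomial e c - r ∈ Ideal.span {(X 0 : MvPolynomial (Fin 3) ℂ) * X 1 - X 2 ^ k} := by
  induction n with
  | zero =>
    intro e c hmin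
    refine ⟨monomial e c, ?_, by simp⟩
    intro d hd
    have : d = e := Finset.mem_singleton.mp (MvPolynomial.support_monomial_subset hd)
    subst this
    omega
  | succ n ih =>
    intro e c hmin
    by_cases h0 : min (e 0) (e 1) = 0
    · refine ⟨monomial e c, ?_, by simp⟩
      intro d hd
      have : d = e := Finset.mem_singleton.mp (MvPolynomial.support_monomial_subset hd)
      subst this
      omega
    · set e' : Fin 3 →₀ ℕ := Finsupp.equivFunOnFinite.symm ![e 0 - 1, e 1 - 1, e 2] with he'
      have he'0 : e' 0 = e 0 - 1 := rfl
      have he'1 : e' 1 = e 1 - 1 := rfl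
      have he'2 : e' 2 = e 2 := rfl
      have hkey : e = e' + (Finsupp.single 0 1 + Finsupp.single 1 1) := by
        ext i
        fin_cases i <;>
          simp [he'0, he'1, he'2, Finsupp.single_apply] <;> omega
      set e'' : Fin 3 →₀ ℕ := e' + Finsupp.single 2 k with he''
      have hmul1 : monomial e c = monomial e' c * (X 0 * X 1) := by
        rw [hkey, X, X, monomial_mul, monomial_mul, mul_one, mul_one]
      have hmul2 : monomial e' c * (X 2 : MvPolynomial (Fin 3) ℂ) ^ k = monomial e'' c := by
        rw [X_pow_eq_monomial, monomial_mul, mul_one]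
      have he''min : min (e'' 0) (e'' 1) ≤ n := by
        have h1 : e'' 0 = e 0 - 1 := by
          rw [he'']; simp [Finsupp.single_apply, he'0]
        have h2 : e'' 1 = e 1 - 1 := by
          rw [he'']; simp [Finsupp.single_apply, he'1]
        omega
      obtain ⟨r, hr, hr2⟩ := ih e'' c he''min
      refine ⟨r, hr, ?_⟩
      have heq : monomial e c - r
          = monomial e' c * (X 0 * X 1 - X 2 ^ k) + (monomial e'' c - r) := by
        rw [← hmul2, hmul1]; ring
      rw [heq]
      exact add_mem (Ideal.mul_mem_left _ _ (Ideal.subset_span rfl)) hr2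

lemma normal_form (k : ℕ) (g : MvPolynomial (Fin 3) ℂ) :
    ∃ r : MvPolynomial (Fin 3) ℂ, (∀ d ∈ r.support, d 0 = 0 ∨ d 1 = 0) ∧
      g - r ∈ Ideal.span {(X 0 : MvPolynomial (Fin 3) ℂ) * X 1 - X 2 ^ k} := by
  induction g using MvPolynomial.induction_on' with
  | monomial e c => exact monomial_normal_form k (min (e 0) (e 1)) e c le_rfl
  | add p q hp hq =>
    obtain ⟨rp, hrp, hrp2⟩ := hp
    obtain ⟨rq, hrq, hrq2⟩ := hq
    refine ⟨rp + rq, ?_, ?_⟩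
    · intro d hd
      rcases Finset.mem_union.mp (MvPolynomial.support_add hd) with h | h
      · exact hrp d h
      · exact hrq d h
    · have : p + q - (rp + rq) = (p - rp) + (q - rq) := by ring
      rw [this]
      exact add_mem hrp2 hrq2

lemma normal_inj (k : ℕ) (hk : 1 ≤ k) (r : MvPolynomial (Fin 3) ℂ)
    (hr : ∀ d ∈ r.support, d 0 = 0 ∨ d 1 = 0)
    (h : aeval ![(X 0 : MvPolynomial (Fin 2) ℂ) ^ k, X 1 ^ k, X 0 * X 1] r = 0) : r = 0 := by
  by_contra hne
  obtain ⟨e, he⟩ := MvPolynomial.support_nonempty.mpr hne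
  have key : coeff (psi k e) (aeval ![X 0 ^ k, X 1 ^ k, X 0 * X 1] r) = coeff e r := by
    conv_lhs => rw [← support_sum_monomial_coeff r]
    rw [map_sum]
    simp_rw [phi_monomial, coeff_sum, coeff_monomial]
    rw [Finset.sum_eq_single e]
    · rw [if_pos rfl]
    · intro d hd hde
      rw [if_neg]
      intro hpsi
      exact hde (psi_inj k hk d e (hr d hd) (hr e he) hpsi)
    · intro hne'
      exact absurd he hne'
  rw [h, coeff_zero] at key
  exact MvPolynomial.mem_support_iff.mp he key.symm

lemma part2 (k : ℕ) (hk : 1 ≤ k)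
    (φ : MvPolynomial (Fin 3) ℂ →ₐ[ℂ] MvPolynomial (Fin 2) ℂ)
    (hφ : φ = aeval ![X 0 ^ k, X 1 ^ k, X 0 * X 1]) :
    RingHom.ker φ.toRingHom = Ideal.span {X 0 * X 1 - X 2 ^ k} := by
  have hgen : φ ((X 0 : MvPolynomial (Fin 3) ℂ) * X 1 - X 2 ^ k) = 0 := by
    simp [hφ, mul_pow]
  apply le_antisymm
  · intro g hg
    rw [RingHom.mem_ker] at hg
    obtain ⟨r, hr, hgr⟩ := normal_form k g
    have hφgr : φ (g - r) = 0 := by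
      obtain ⟨c, hc⟩ := Ideal.mem_span_singleton.mp hgr
      rw [hc, map_mul, hgen, zero_mul]
    have hφr : aeval ![(X 0 : MvPolynomial (Fin 2) ℂ) ^ k, X 1 ^ k, X 0 * X 1] r = 0 := by
      rw [← hφ]
      have : φ r = φ g - φ (g - r) := by rw [map_sub]; ring
      rw [this, hφgr, sub_zero]
      exact hg
    have hr0 : r = 0 := normal_inj k hk r hr hφr
    rw [hr0, sub_zero] at hgr
    exact hgr
  · rw [Ideal.span_le]
    intro x hx
    rw [Set.mem_singleton_iff] at hx
    subst hx
    exact hgen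

/-- Let `k ≥ 1` and `ζ` a primitive `k`-th root of unity. Let
`σ` be the ℂ-algebra endomorphism of `ℂ[x,y]` with `σ(x) = ζx`, `σ(y) = ζ⁻¹y`
and let `B = {p : σ p = p}` be the invariant subalgebra. Then (1) `B` is
generated as a ℂ-algebra by `x^k, y^k, xy`; (2) the ℂ-algebra homomorphism
`φ : ℂ[z₁,z₂,z₃] → ℂ[x,y]` with `φ(z₁) = x^k`, `φ(z₂) = y^k`, `φ(z₃) = xy`
has kernel `⟨z₁z₂ − z₃^k⟩`, so `B ≅ ℂ[z₁,z₂,z₃]/⟨z₁z₂ − z₃^k⟩`. -/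
theorem stmt_19 (k : ℕ) (hk : 1 ≤ k) (ζ : ℂ) (hζ : IsPrimitiveRoot ζ k)
    (σ : MvPolynomial (Fin 2) ℂ →ₐ[ℂ] MvPolynomial (Fin 2) ℂ)
    (hσ : σ = aeval (fun i : Fin 2 => if i = 0 then C ζ * X 0 else C ζ⁻¹ * X 1))
    (B : Subalgebra ℂ (MvPolynomial (Fin 2) ℂ))
    (hB : ∀ p, p ∈ B ↔ σ p = p)
    (φ : MvPolynomial (Fin 3) ℂ →ₐ[ℂ] MvPolynomial (Fin 2) ℂ)
    (hφ : φ = aeval ![X 0 ^ k, X 1 ^ k, X 0 * X 1]) :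
    B = Algebra.adjoin ℂ {X 0 ^ k, X 1 ^ k, X 0 * X 1} ∧
    RingHom.ker φ.toRingHom = Ideal.span {X 0 * X 1 - X 2 ^ k} ∧
    Nonempty ((MvPolynomial (Fin 3) ℂ ⧸
      Ideal.span {(X 0 : MvPolynomial (Fin 3) ℂ) * X 1 - X 2 ^ k}) ≃ₐ[ℂ] B) := by

  have h1 := part1 k hk ζ hζ σ hσ B hB
  have h2 := part2 k hk φ hφ
  refine ⟨h1, h2, ?_⟩
  have hrange : φ.range = Algebra.adjoin ℂ {X 0 ^ k, X 1 ^ k, X 0 * X 1} := by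
    rw [hφ, ← Algebra.adjoin_range_eq_range_aeval]
    congr 1
    ext x
    constructor
    · rintro ⟨i, rfl⟩
      fin_cases i <;> simp
    · intro hx
      rcases hx with rfl | rfl | rfl
      exacts [⟨0, rfl⟩, ⟨1, rfl⟩, ⟨2, rfl⟩]
  have hmem : ∀ x, φ x ∈ B := by
    intro x
    rw [h1, ← hrange]
    exact ⟨x, rfl⟩
  have hsurj : Function.Surjective (φ.codRestrict B hmem) := by
    rintro ⟨b, hb⟩
    rw [h1, ← hrange] at hb
    obtain ⟨x, hx⟩ := hb
    exact ⟨x, Subtype.ext hx⟩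
  have hker : RingHom.ker (φ.codRestrict B hmem).toRingHom
      = Ideal.span {(X 0 : MvPolynomial (Fin 3) ℂ) * X 1 - X 2 ^ k} := by
    rw [← h2]
    apply SetLike.ext
    intro x
    rw [RingHom.mem_ker, RingHom.mem_ker]
    constructor
    · intro h
      exact congrArg Subtype.val h
    · intro h
      exact Subtype.ext h
  exact ⟨(Ideal.quotientEquivAlgOfEq ℂ hker.symm).trans
    (Ideal.quotientKerAlgEquivOfSurjective hsurj)⟩
end
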